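/- Let λ be an uncountable regular cardinal with λ^{<λ} = λ, let A ⊆ λ^2 and let t ∈ 2^{<λ}. Then: (1) player I has a winning strategy in the perfect set game F^t_λ(A) if and only if A ∩ N_t has a perfect subset; (2) player II has a winning strategy in F^t_λ(A) if and only if |A ∩ N_t| ≤ λ. -/

import Mathlib

universe u

noncomputable section

/-! ## Sequences of ordinals

`SeqLT o v` is the set `v^{<o}` of all sequences of ordinals `< v` of length `< o`
(for `o > 0`; values beyond the length are normalized to `0`).
`SeqFull o v` is the generalized Baire space `v^o` of all functions from ordinals `< o`
to ordinals `< v`. -/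

/-- An element of `v^{<o}`: a sequence of ordinals `< v` of length `< o`. -/
structure SeqLT (o v : Ordinal.{u}) : Type (u + 1) where
  len : Ordinal.{u}
  len_lt : len < o ⊔ 1
  val : Ordinal.{u} → Ordinal.{u}
  val_lt : ∀ β, β < len → val β < v
  val_zero : ∀ β, len ≤ β → val β = 0

namespace SeqLT

variable {o v : Ordinal.{u}}

/-- `s ⊆ t`, i.e. `t` end-extends `s`. -/
protected def le (s t : SeqLT o v) : Prop :=
  s.len ≤ t.len ∧ ∀ β, β < s.len → s.val β = t.val β

/-- `s ⊊ t`, i.e. `t` properly end-extends `s`. -/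
protected def slt (s t : SeqLT o v) : Prop :=
  s.le t ∧ s.len < t.len

/-- The empty sequence. -/
protected def empty (o v : Ordinal.{u}) : SeqLT o v where
  len := 0
  len_lt := lt_sup_iff.mpr (Or.inr zero_lt_one)
  val := fun _ => 0
  val_lt := fun β h => absurd h (not_lt_of_ge zero_le)
  val_zero := fun _ _ => rfl

/-- `s⌢⟨β⟩`: the sequence `s` extended by the single value `β`. -/
def snoc (s : SeqLT o v) (β : Ordinal.{u}) : SeqLT o v :=
  if h : s.len + 1 < o ⊔ 1 ∧ β < v then
    { len := s.len + 1
      len_lt := h.1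
      val := fun γ => if γ = s.len then β else s.val γ
      val_lt := fun γ hγ => by
        rcases eq_or_ne γ s.len with rfl | hne
        · simpa using h.2
        · simp only [if_neg hne]
          refine s.val_lt γ (lt_of_le_of_ne ?_ hne)
          rw [Ordinal.add_one_eq_succ] at hγ
          exact Order.lt_succ_iff.mp hγ
      val_zero := fun γ hγ => by
        have h1 : s.len < γ :=
          lt_of_lt_of_le (by rw [Ordinal.add_one_eq_succ]; exact Order.lt_succ s.len) hγ
        simp only [if_neg h1.ne']
        exact s.val_zero γ h1.le }
  else s

protected theorem le_refl (s : SeqLT o v) : s.le s :=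
  ⟨le_rfl, fun _ _ => rfl⟩

protected theorem le_trans {s t u : SeqLT o v} (h1 : s.le t) (h2 : t.le u) : s.le u :=
  ⟨h1.1.trans h2.1, fun β hβ => (h1.2 β hβ).trans (h2.2 β (lt_of_lt_of_le hβ h1.1))⟩

end SeqLT

/-- An element of the generalized Baire space `v^o`. -/
structure SeqFull (o v : Ordinal.{u}) : Type (u + 1) where
  val : Ordinal.{u} → Ordinal.{u}
  val_lt : ∀ β, β < o → val β < v
  val_zero : ∀ β, o ≤ β → val β = 0

/-- The restriction `x ↾ β` of `x : v^o` to an ordinal `β < o`. -/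
def SeqFull.res {o v : Ordinal.{u}} (x : SeqFull o v) (β : Ordinal.{u}) : SeqLT o v :=
  if h : β < o ⊔ 1 then
    { len := β
      len_lt := h
      val := fun γ => if γ < β then x.val γ else 0
      val_lt := fun γ hγ => by
        simp only [if_pos hγ]
        rcases lt_sup_iff.mp h with h' | h'
        · exact x.val_lt γ (hγ.trans h')
        · rw [Ordinal.lt_one_iff_zero] at h'
          exact absurd (h' ▸ hγ) (not_lt_of_ge zero_le)
      val_zero := fun γ hγ => if_neg (not_lt.mpr hγ) }
  else SeqLT.empty o v

/-- `s ⊆ x`: the sequence `s` is an initial segment of `x : v^o`. -/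
def SeqLT.prefixOf {o v : Ordinal.{u}} (s : SeqLT o v) (x : SeqFull o v) : Prop :=
  ∀ β, β < s.len → s.val β = x.val β

/-! ## The bounded topology -/

/-- The basic open set `N_t`. -/
def basicOpen {o v : Ordinal.{u}} (t : SeqLT o v) : Set (SeqFull o v) :=
  {x | t.prefixOf x}

/-- The bounded (standard) topology on the generalized Baire space, generated by the
basic open sets `N_t`. -/
instance (o v : Ordinal.{u}) : TopologicalSpace (SeqFull o v) :=
  TopologicalSpace.generateFrom {U | ∃ t : SeqLT o v, U = basicOpen t}

/-- `A` is a nowhere dense subset of `B` (in the subspace topology on `B`). -/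
def NowhereDenseIn {o v : Ordinal.{u}} (A B : Set (SeqFull o v)) : Prop :=
  A ⊆ B ∧ interior (closure {x : ↥B | (x : SeqFull o v) ∈ A}) = ∅

/-- `A` is `o`-meager in `B`: `A ∩ B` is the union of (card of) `o` many nowhere dense
subsets of `B`. -/
def MeagerIn {o v : Ordinal.{u}} (A B : Set (SeqFull o v)) : Prop :=
  ∃ F : {β : Ordinal.{u} // β < o} → Set (SeqFull o v),
    (∀ i, NowhereDenseIn (F i) B) ∧ A ∩ B = ⋃ i, F i

/-- `A` is comeager in `B`: `B \ A` is meager in `B`. -/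
def ComeagerIn {o v : Ordinal.{u}} (A B : Set (SeqFull o v)) : Prop :=
  MeagerIn (B \ A) B

/-- `A` has the `o`-Baire property: for some open `U`, `A △ U` is meager. -/
def BaireSet {o v : Ordinal.{u}} (A : Set (SeqFull o v)) : Prop :=
  ∃ U : Set (SeqFull o v), IsOpen U ∧ MeagerIn (symmDiff A U) Set.univ

/-! ## Homomorphisms of `v^{<o}` -/

/-- A homomorphism: strictly extension-preserving map of `v^{<o}` to itself. -/
def IsHom {o v : Ordinal.{u}} (f : SeqLT o v → SeqLT o v) : Prop :=
  ∀ s t : SeqLT o v, s.slt t → (f s).slt (f t)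

/-- `f` is dense: for every `s` and every `t ⊇ f(s)` there is `β < v` with
`f(s⌢⟨β⟩) ⊇ t`. -/
def IsDenseMap {o v : Ordinal.{u}} (f : SeqLT o v → SeqLT o v) : Prop :=
  ∀ s t : SeqLT o v, (f s).le t → ∃ β, β < v ∧ t.le (f (s.snoc β))

/-- `u = ⋃_{α<γ} s α` for a chain `s`. -/
def IsUnionOfChain {o v : Ordinal.{u}} (u : SeqLT o v) (γ : Ordinal.{u})
    (s : Ordinal.{u} → SeqLT o v) : Prop :=
  (∀ α, α < γ → (s α).le u) ∧ ∀ β, β < u.len → ∃ α, α < γ ∧ β < (s α).len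

/-- `f` is continuous: for every limit `γ < o` and every strictly increasing sequence
`⟨s_α : α < γ⟩`, `f(⋃_{α<γ} s_α) = ⋃_{α<γ} f(s_α)`. -/
def IsContinuousMap {o v : Ordinal.{u}} (f : SeqLT o v → SeqLT o v) : Prop :=
  ∀ γ : Ordinal.{u}, Order.IsSuccLimit γ → γ < o →
    ∀ s : Ordinal.{u} → SeqLT o v, (∀ α β, α < β → β < γ → (s α).slt (s β)) →
      ∀ u : SeqLT o v, IsUnionOfChain u γ s → IsUnionOfChain (f u) γ fun α => f (s α)

/-- `y = f*(x) = ⋃_{α<o} f(x↾α)` for a homomorphism `f`. -/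
def FStarVal {o v : Ordinal.{u}} (f : SeqLT o v → SeqLT o v) (x y : SeqFull o v) : Prop :=
  (∀ α, α < o → (f (x.res α)).prefixOf y) ∧
    ∀ β, β < o → ∃ α, α < o ∧ β < (f (x.res α)).len

/-! ## Clubs and the almost Baire property -/

/-- `C` is a club (closed unbounded set) in the ordinal `o`. -/
def IsClubIn (C : Set Ordinal.{u}) (o : Ordinal.{u}) : Prop :=
  (∀ γ ∈ C, γ < o) ∧ (∀ β, β < o → ∃ γ ∈ C, β ≤ γ) ∧
    ∀ β, β < o → 0 < β → (∀ γ, γ < β → ∃ ξ ∈ C, γ < ξ ∧ ξ < β) → β ∈ C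

/-- The set of functions coding elements of the club filter as characteristic functions. -/
def ClSet (o v : Ordinal.{u}) : Set (SeqFull o v) :=
  {x | ∃ C : Set Ordinal.{u}, IsClubIn C o ∧ ∀ i ∈ C, x.val i ≠ 0}

/-- The set of functions coding elements of the nonstationary ideal. -/
def NsSet (o v : Ordinal.{u}) : Set (SeqFull o v) :=
  {x | ∃ C : Set Ordinal.{u}, IsClubIn C o ∧ ∀ i ∈ C, x.val i = 0}

/-- `A` is almost Baire: there is a dense homomorphism `f` with `ran f* ⊆ A`, or a dense
continuous homomorphism `f` with `f ∅ = ∅` and `ran f* ⊆ Aᶜ`. -/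
def AlmostBaire {o v : Ordinal.{u}} (A : Set (SeqFull o v)) : Prop :=
  ∃ f : SeqLT o v → SeqLT o v, IsHom f ∧ IsDenseMap f ∧
    ((∀ x y, FStarVal f x y → y ∈ A) ∨
      ((∀ x y, FStarVal f x y → y ∉ A) ∧ IsContinuousMap f ∧
        f (SeqLT.empty o v) = SeqLT.empty o v))

/-! ## Banach–Mazur games of length `o`

A run of the game is a strictly increasing sequence `⟨s_α : α < o⟩` in `v^{<o}`;
player I plays at even positions (`0` and limits count as even), player II at odd ones.
In the game `G^t` the first move of player I must extend `t`; taking `t = ∅` gives the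
plain Banach–Mazur game. -/

/-- `γ` is an even ordinal (`0` and limits are even). -/
def EvenOrd (γ : Ordinal.{u}) : Prop := ∃ δ : Ordinal.{u}, γ = 2 * δ

/-- `γ` is an odd ordinal. -/
def OddOrd (γ : Ordinal.{u}) : Prop := ∃ δ : Ordinal.{u}, γ = 2 * δ + 1

/-- The moves of a (partial) run, as a function on ordinals. -/
abbrev Play (o v : Ordinal.{u}) := Ordinal.{u} → SeqLT o v

/-- A strategy: given the length of the current position and the moves so far,
produce the next move. -/
abbrev Strat (o v : Ordinal.{u}) := Ordinal.{u} → Play o v → SeqLT o v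

/-- `p` is a legal partial run of length `γ` of the game `G^t`: strictly increasing moves,
the first move extends `t`, and the moves beyond `γ` are normalized to `∅`. -/
def IsPos {o v : Ordinal.{u}} (t : SeqLT o v) (p : Play o v) (γ : Ordinal.{u}) : Prop :=
  (∀ α β, α < β → β < γ → (p α).slt (p β)) ∧ (0 < γ → t.le (p 0)) ∧
    ∀ α, γ ≤ α → p α = SeqLT.empty o v

/-- The restriction of a run to its first `γ` moves. -/
def resPlay {o v : Ordinal.{u}} (p : Play o v) (γ : Ordinal.{u}) : Play o v :=
  fun α => if α < γ then p α else SeqLT.empty o v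

/-- `m` is a legal move at the position `p` of length `γ` in the game `G^t`. -/
def MoveOK {o v : Ordinal.{u}} (t : SeqLT o v) (p : Play o v) (γ : Ordinal.{u})
    (m : SeqLT o v) : Prop :=
  (∀ α, α < γ → (p α).slt m) ∧ (γ = 0 → t.le m)

/-- `σ` is a strategy for player I in `G^t`: it assigns a legal move to every legal
position of even length. -/
def LegalI {o v : Ordinal.{u}} (t : SeqLT o v) (σ : Strat o v) : Prop :=
  ∀ γ, γ < o → EvenOrd γ → ∀ p, IsPos t p γ → MoveOK t p γ (σ γ p)

/-- `σ` is a strategy for player II in `G^t`: it assigns a legal move to every legal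
position of odd length. -/
def LegalII {o v : Ordinal.{u}} (t : SeqLT o v) (σ : Strat o v) : Prop :=
  ∀ γ, γ < o → OddOrd γ → ∀ p, IsPos t p γ → MoveOK t p γ (σ γ p)

/-- The first `γ` moves of `p` follow the strategy `σ` of player I. -/
def FollowsI {o v : Ordinal.{u}} (σ : Strat o v) (p : Play o v) (γ : Ordinal.{u}) : Prop :=
  ∀ α, α < γ → EvenOrd α → p α = σ α (resPlay p α)

/-- The first `γ` moves of `p` follow the strategy `σ` of player II. -/
def FollowsII {o v : Ordinal.{u}} (σ : Strat o v) (p : Play o v) (γ : Ordinal.{u}) : Prop :=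
  ∀ α, α < γ → OddOrd α → p α = σ α (resPlay p α)

/-- `x = ⋃_{α<o} p α` is the outcome of the complete run `p`. -/
def IsOutcome {o v : Ordinal.{u}} (p : Play o v) (x : SeqFull o v) : Prop :=
  (∀ α, α < o → (p α).prefixOf x) ∧ ∀ β, β < o → ∃ α, α < o ∧ β < (p α).len

/-- Player I has a winning strategy in the Banach–Mazur game `G^t(A)` of length `o`. -/
def WinIStrat {o v : Ordinal.{u}} (t : SeqLT o v) (A : Set (SeqFull o v)) : Prop :=
  ∃ σ : Strat o v, LegalI t σ ∧
    ∀ p : Play o v, IsPos t p o → FollowsI σ p o → ∃ x, IsOutcome p x ∧ x ∈ A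

/-- Player II has a winning strategy in the Banach–Mazur game `G^t(A)` of length `o`. -/
def WinIIStrat {o v : Ordinal.{u}} (t : SeqLT o v) (A : Set (SeqFull o v)) : Prop :=
  ∃ σ : Strat o v, LegalII t σ ∧
    ∀ p : Play o v, IsPos t p o → FollowsII σ p o → ∃ x, IsOutcome p x ∧ x ∉ A

/-- `σ` is a tactic for player II: its moves depend only on the union of the previous moves. -/
def IsTacticII {o v : Ordinal.{u}} (t : SeqLT o v) (σ : Strat o v) : Prop :=
  ∃ f : SeqLT o v → SeqLT o v, ∀ γ, γ < o → OddOrd γ → ∀ p, IsPos t p γ →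
    ∀ u, IsUnionOfChain u γ p → σ γ p = f u

/-- Player II has a winning tactic in the Banach–Mazur game `G^t(A)` of length `o`. -/
def WinIITactic {o v : Ordinal.{u}} (t : SeqLT o v) (A : Set (SeqFull o v)) : Prop :=
  ∃ σ : Strat o v, LegalII t σ ∧ IsTacticII t σ ∧
    ∀ p : Play o v, IsPos t p o → FollowsII σ p o → ∃ x, IsOutcome p x ∧ x ∉ A

/-! ## Trees and perfect sets -/

/-- A subtree of `v^{<o}`: a downwards closed set of sequences. -/
def IsSubtree {o v : Ordinal.{u}} (T : Set (SeqLT o v)) : Prop :=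
  ∀ s ∈ T, ∀ r : SeqLT o v, r.le s → r ∈ T

/-- `T` is closed: every strictly increasing sequence in `T` of length `< o` has an
upper bound in `T`. -/
def TreeClosed {o v : Ordinal.{u}} (T : Set (SeqLT o v)) : Prop :=
  ∀ γ : Ordinal.{u}, γ < o → ∀ s : Ordinal.{u} → SeqLT o v,
    (∀ α β, α < β → β < γ → (s α).slt (s β)) → (∀ α, α < γ → s α ∈ T) →
      ∃ b ∈ T, ∀ α, α < γ → (s α).le b

/-- `t` is a direct successor of `s`. -/
def IsDirectSucc {o v : Ordinal.{u}} (s t : SeqLT o v) : Prop :=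
  s.slt t ∧ t.len = s.len + 1

/-- `T` is a perfect tree: a (nonempty) closed subtree whose splitting nodes are cofinal. -/
def IsPerfectTree {o v : Ordinal.{u}} (T : Set (SeqLT o v)) : Prop :=
  T.Nonempty ∧ IsSubtree T ∧ TreeClosed T ∧
    ∀ s ∈ T, ∃ t ∈ T, s.le t ∧
      ∃ t₁ ∈ T, ∃ t₂ ∈ T, IsDirectSucc t t₁ ∧ IsDirectSucc t t₂ ∧ t₁ ≠ t₂

/-- The body `[T]` of a tree `T`: the set of branches of length `o` through `T`. -/
def treeBody {o v : Ordinal.{u}} (T : Set (SeqLT o v)) : Set (SeqFull o v) :=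
  {x | ∀ α, α < o → x.res α ∈ T}

/-- `p` is a legal partial run of length `γ` of the perfect set game `F^t`: strictly
increasing binary sequences, the first move extends `t`, after each even round `α` the
move of player II has length `dom (p α) + 1`, and moves beyond `γ` are normalized. -/
def IsPosF {o : Ordinal.{u}} (t : SeqLT o 2) (p : Play o 2) (γ : Ordinal.{u}) : Prop :=
  (∀ α β, α < β → β < γ → (p α).slt (p β)) ∧ (0 < γ → t.le (p 0)) ∧
    (∀ α, EvenOrd α → α + 1 < γ → (p (α + 1)).len = (p α).len + 1) ∧
    ∀ α, γ ≤ α → p α = SeqLT.empty o 2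

/-- `m` is a legal move for player II at the position `p` of odd length `γ` in the perfect
set game: it strictly extends all previous moves and has length `dom (p δ) + 1` where
`γ = δ + 1`. -/
def MoveOKFII {o : Ordinal.{u}} (p : Play o 2) (γ : Ordinal.{u}) (m : SeqLT o 2) : Prop :=
  (∀ α, α < γ → (p α).slt m) ∧ ∀ δ, γ = δ + 1 → m.len = (p δ).len + 1

/-- `σ` is a strategy for player I in the perfect set game `F^t`. -/
def LegalFI {o : Ordinal.{u}} (t : SeqLT o 2) (σ : Strat o 2) : Prop :=
  ∀ γ, γ < o → EvenOrd γ → ∀ p, IsPosF t p γ → MoveOK t p γ (σ γ p)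

/-- `σ` is a strategy for player II in the perfect set game `F^t`. -/
def LegalFII {o : Ordinal.{u}} (t : SeqLT o 2) (σ : Strat o 2) : Prop :=
  ∀ γ, γ < o → OddOrd γ → ∀ p, IsPosF t p γ → MoveOKFII p γ (σ γ p)

/-- Player I has a winning strategy in the perfect set game `F^t(A)` of length `o`. -/
def WinFIStrat {o : Ordinal.{u}} (t : SeqLT o 2) (A : Set (SeqFull o 2)) : Prop :=
  ∃ σ : Strat o 2, LegalFI t σ ∧
    ∀ p : Play o 2, IsPosF t p o → FollowsI σ p o → ∃ x, IsOutcome p x ∧ x ∈ A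

/-- Player II has a winning strategy in the perfect set game `F^t(A)` of length `o`. -/
def WinFIIStrat {o : Ordinal.{u}} (t : SeqLT o 2) (A : Set (SeqFull o 2)) : Prop :=
  ∃ σ : Strat o 2, LegalFII t σ ∧
    ∀ p : Play o 2, IsPosF t p o → FollowsII σ p o → ∃ x, IsOutcome p x ∧ x ∉ A

/-! ### Auxiliary development -/

section Aux
open Ordinal

namespace SeqLT

variable {o v : Ordinal.{u}}

theorem ext' {s t : SeqLT o v} (hlen : s.len = t.len)
    (hval : ∀ β, β < s.len → s.val β = t.val β) : s = t := by
  have hv : s.val = t.val := by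
    funext β
    rcases lt_or_ge β s.len with h | h
    · exact hval β h
    · rw [s.val_zero β h, t.val_zero β (hlen ▸ h)]
  cases s; cases t
  simp only [SeqLT.mk.injEq] at *
  exact ⟨hlen, hv⟩

protected theorem le_antisymm {s t : SeqLT o v} (h1 : s.le t) (h2 : t.le s) : s = t :=
  ext' (le_antisymm h1.1 h2.1) h1.2

protected theorem slt_of_le_of_slt {s t u : SeqLT o v} (h1 : s.le t) (h2 : t.slt u) :
    s.slt u := ⟨SeqLT.le_trans h1 h2.1, lt_of_le_of_lt h1.1 h2.2⟩

protected theorem slt_of_slt_of_le {s t u : SeqLT o v} (h1 : s.slt t) (h2 : t.le u) :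
    s.slt u := ⟨SeqLT.le_trans h1.1 h2, lt_of_lt_of_le h1.2 h2.1⟩

theorem empty_le (s : SeqLT o v) : (SeqLT.empty o v).le s :=
  ⟨zero_le, fun β h => absurd h not_lt_zero⟩

@[simp] theorem empty_len : (SeqLT.empty o v).len = 0 := rfl

/-- Two prefixes of a common extension are comparable. -/
theorem le_of_le_le {s t w : SeqLT o v} (hs : s.le w) (ht : t.le w)
    (hlen : s.len ≤ t.len) : s.le t :=
  ⟨hlen, fun β hβ => by rw [hs.2 β hβ, ht.2 β (lt_of_lt_of_le hβ hlen)]⟩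

theorem eq_of_le_le_len {s t w : SeqLT o v} (hs : s.le w) (ht : t.le w)
    (hlen : s.len = t.len) : s = t :=
  SeqLT.le_antisymm (le_of_le_le hs ht hlen.le) (le_of_le_le ht hs hlen.ge)

section snoc

variable {s : SeqLT o v} {β : Ordinal.{u}}

theorem snoc_len (h1 : s.len + 1 < o ⊔ 1) (h2 : β < v) : (s.snoc β).len = s.len + 1 := by
  rw [snoc, dif_pos ⟨h1, h2⟩]

theorem snoc_val_last (h1 : s.len + 1 < o ⊔ 1) (h2 : β < v) : (s.snoc β).val s.len = β := by
  rw [snoc, dif_pos ⟨h1, h2⟩]; simp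

theorem snoc_val_of_lt (h1 : s.len + 1 < o ⊔ 1) (h2 : β < v) {γ : Ordinal.{u}}
    (hγ : γ < s.len) : (s.snoc β).val γ = s.val γ := by
  rw [snoc, dif_pos ⟨h1, h2⟩]; simp [hγ.ne]

theorem le_snoc (h1 : s.len + 1 < o ⊔ 1) (h2 : β < v) : s.le (s.snoc β) := by
  refine ⟨?_, fun γ hγ => (snoc_val_of_lt h1 h2 hγ).symm⟩
  rw [snoc_len h1 h2]; exact le_of_lt (lt_add_one _)

theorem slt_snoc (h1 : s.len + 1 < o ⊔ 1) (h2 : β < v) : s.slt (s.snoc β) :=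
  ⟨le_snoc h1 h2, by rw [snoc_len h1 h2]; exact lt_add_one _⟩

/-- A sequence of length `s.len + 1` extending `s` is a `snoc`. -/
theorem eq_snoc_of_slt {m : SeqLT o v} (h1 : s.len + 1 < o ⊔ 1)
    (hle : s.le m) (hlen : m.len = s.len + 1) : m = s.snoc (m.val s.len) := by
  have h2 : m.val s.len < v := m.val_lt _ (by rw [hlen]; exact lt_add_one _)
  refine ext' (by rw [hlen, snoc_len h1 h2]) (fun γ hγ => ?_)
  rw [hlen] at hγ
  rcases eq_or_ne γ s.len with rfl | hne
  · rw [snoc_val_last h1 h2]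
  · have : γ < s.len := lt_of_le_of_ne (by
      rwa [Ordinal.add_one_eq_succ, Order.lt_succ_iff] at hγ) hne
    rw [snoc_val_of_lt h1 h2 this, hle.2 γ this]

end snoc

end SeqLT

namespace SeqFull

variable {o v : Ordinal.{u}}

theorem ext' {x y : SeqFull o v} (h : ∀ β, β < o → x.val β = y.val β) : x = y := by
  have hv : x.val = y.val := by
    funext β
    rcases lt_or_ge β o with hβ | hβ
    · exact h β hβ
    · rw [x.val_zero β hβ, y.val_zero β hβ]
  cases x; cases y
  simp_all

theorem res_len {x : SeqFull o v} {β : Ordinal.{u}} (h : β < o ⊔ 1) : (x.res β).len = β := by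
  rw [res, dif_pos h]

theorem res_val {x : SeqFull o v} {β γ : Ordinal.{u}} (h : β < o ⊔ 1) (hγ : γ < β) :
    (x.res β).val γ = x.val γ := by
  rw [res, dif_pos h]; simp [hγ]

theorem res_prefixOf (x : SeqFull o v) (β : Ordinal.{u}) : (x.res β).prefixOf x := by
  intro γ hγ
  by_cases h : β < o ⊔ 1
  · rw [res_len h] at hγ; exact res_val h hγ
  · rw [res, dif_neg h] at hγ ⊢; exact absurd hγ not_lt_zero

theorem le_res {s : SeqLT o v} {x : SeqFull o v} (hs : s.prefixOf x) {β : Ordinal.{u}}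
    (hβ : β < o ⊔ 1) (hlen : s.len ≤ β) : s.le (x.res β) := by
  refine ⟨by rw [res_len hβ]; exact hlen, fun γ hγ => ?_⟩
  rw [res_val hβ (lt_of_lt_of_le hγ hlen), hs γ hγ]

theorem prefixOf_of_le {s m : SeqLT o v} {x : SeqFull o v} (h : s.le m) (hm : m.prefixOf x) :
    s.prefixOf x := fun γ hγ => by
  rw [h.2 γ hγ, hm γ (lt_of_lt_of_le hγ h.1)]

theorem res_eq_of_le {s : SeqLT o v} {x : SeqFull o v} (hs : s.prefixOf x)
    (hβ : s.len < o ⊔ 1) : x.res s.len = s := by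
  refine SeqLT.ext' (res_len hβ) (fun γ hγ => ?_)
  rw [res_len hβ] at hγ
  rw [res_val hβ hγ, hs γ hγ]

end SeqFull

end Aux
section Aux2
open Ordinal

/-! ### Parity of ordinals -/

theorem ordinal_lt_two_iff {m : Ordinal.{u}} : m < 2 ↔ m = 0 ∨ m = 1 := by
  have h2 : (2 : Ordinal.{u}) = Order.succ 1 := by
    rw [← Ordinal.add_one_eq_succ]; norm_num
  rw [h2, Order.lt_succ_iff, Ordinal.le_one_iff]

theorem evenOrd_or_oddOrd (γ : Ordinal.{u}) : EvenOrd γ ∨ OddOrd γ := by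
  have h := Ordinal.div_add_mod γ 2
  have hm : γ % 2 < 2 := Ordinal.mod_lt γ two_ne_zero
  rcases ordinal_lt_two_iff.1 hm with h0 | h1
  · exact Or.inl ⟨γ / 2, by conv_lhs => rw [← h, h0, add_zero]⟩
  · exact Or.inr ⟨γ / 2, by conv_lhs => rw [← h, h1]⟩

theorem two_mul_ne_two_mul_add_one {d e : Ordinal.{u}} : 2 * d ≠ 2 * e + 1 := by
  intro h
  rcases le_or_gt d e with hle | hlt
  · have : 2 * d ≤ 2 * e := mul_le_mul_right hle 2
    have h2 : 2 * e < 2 * e + 1 := by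
      rw [Ordinal.add_one_eq_succ]; exact Order.lt_succ _
    exact absurd h (by exact ne_of_lt (lt_of_le_of_lt this h2))
  · have he1 : e + 1 ≤ d := by rwa [Ordinal.add_one_eq_succ, Order.succ_le_iff]
    have : 2 * (e + 1) ≤ 2 * d := mul_le_mul_right he1 2
    rw [mul_add, mul_one] at this
    have h2 : 2 * e + 1 < 2 * e + 2 := by
      apply add_lt_add_right; norm_num
    exact absurd h.symm (by exact ne_of_lt (lt_of_lt_of_le h2 this))

theorem not_evenOrd_and_oddOrd {γ : Ordinal.{u}} (h1 : EvenOrd γ) (h2 : OddOrd γ) : False := by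
  obtain ⟨d, rfl⟩ := h1; obtain ⟨e, he⟩ := h2
  exact two_mul_ne_two_mul_add_one he

theorem evenOrd_zero : EvenOrd (0 : Ordinal.{u}) := ⟨0, by rw [mul_zero]⟩

theorem oddOrd_succ_of_even {γ : Ordinal.{u}} (h : EvenOrd γ) : OddOrd (γ + 1) := by
  obtain ⟨d, rfl⟩ := h; exact ⟨d, rfl⟩

theorem evenOrd_succ_of_odd {γ : Ordinal.{u}} (h : OddOrd γ) : EvenOrd (γ + 1) := by
  obtain ⟨d, rfl⟩ := h
  refine ⟨d + 1, ?_⟩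
  rw [mul_add, mul_one, add_assoc]
  norm_num

theorem oddOrd_succ_iff {γ : Ordinal.{u}} : OddOrd (γ + 1) ↔ EvenOrd γ := by
  constructor
  · intro h
    rcases evenOrd_or_oddOrd γ with he | ho
    · exact he
    · exact absurd (evenOrd_succ_of_odd ho) (fun h' => not_evenOrd_and_oddOrd h' h)
  · exact oddOrd_succ_of_even

theorem evenOrd_succ_iff {γ : Ordinal.{u}} : EvenOrd (γ + 1) ↔ OddOrd γ := by
  constructor
  · intro h
    rcases evenOrd_or_oddOrd γ with he | ho
    · exact absurd (oddOrd_succ_of_even he) (not_evenOrd_and_oddOrd h)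
    · exact ho
  · exact evenOrd_succ_of_odd

theorem evenOrd_of_isLimit {γ : Ordinal.{u}} (h : Order.IsSuccLimit γ) : EvenOrd γ := by
  rcases evenOrd_or_oddOrd γ with he | ho
  · exact he
  · obtain ⟨e, he⟩ := ho
    have h1 : 2 * e < γ := by
      rw [he, Ordinal.add_one_eq_succ]; exact Order.lt_succ _
    have := h.succ_lt h1
    rw [← Ordinal.add_one_eq_succ, ← he] at this
    exact absurd this (lt_irrefl γ)

theorem oddOrd_dest {γ : Ordinal.{u}} (h : OddOrd γ) : ∃ δ, EvenOrd δ ∧ γ = δ + 1 := by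
  obtain ⟨e, rfl⟩ := h; exact ⟨2 * e, ⟨e, rfl⟩, rfl⟩

theorem two_mul_left_cancel {d e : Ordinal.{u}} (h : 2 * d = 2 * e) : d = e := by
  by_contra hne
  rcases lt_or_gt_of_ne hne with hlt | hlt
  · exact absurd h (ne_of_lt (mul_lt_mul_of_pos_left hlt (by norm_num)))
  · exact absurd h.symm (ne_of_lt (mul_lt_mul_of_pos_left hlt (by norm_num)))

theorem two_mul_add_one_inj {d e : Ordinal.{u}} (h : 2 * d + 1 = 2 * e + 1) : d = e := by
  rw [Ordinal.add_one_eq_succ, Ordinal.add_one_eq_succ] at h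
  exact two_mul_left_cancel (Order.succ_injective h)

/-! ### Hypotheses on the length ordinal -/

structure OrdH (o : Ordinal.{u}) : Prop where
  lim : Order.IsSuccLimit o
  bd : ∀ γ, γ < o → ∀ f : Ordinal.{u} → Ordinal.{u},
    (∀ α, α < γ → f α < o) → ∃ b, b < o ∧ ∀ α, α < γ → f α ≤ b
  mul2 : ∀ δ, δ < o → 2 * δ + 1 < o

namespace OrdH

variable {o v : Ordinal.{u}}

theorem one_lt (h : OrdH o) : 1 < o := Ordinal.one_lt_of_isSuccLimit h.lim

theorem sup1 (h : OrdH o) : o ⊔ 1 = o := sup_eq_left.2 h.one_lt.le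

theorem len_lt (h : OrdH o) (s : SeqLT o v) : s.len < o := by
  have := s.len_lt; rwa [h.sup1] at this

theorem succ_lt (h : OrdH o) {α : Ordinal.{u}} (hα : α < o) : α + 1 < o := by
  rw [Ordinal.add_one_eq_succ]; exact h.lim.succ_lt hα

theorem snoc_active (h : OrdH o) (s : SeqLT o v) : s.len + 1 < o ⊔ 1 := by
  rw [h.sup1]; exact h.succ_lt (h.len_lt s)

theorem snoc_len (h : OrdH o) (s : SeqLT o v) {b : Ordinal.{u}} (hb : b < v) :
    (s.snoc b).len = s.len + 1 := SeqLT.snoc_len (h.snoc_active s) hb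

theorem snoc_val_last (h : OrdH o) (s : SeqLT o v) {b : Ordinal.{u}} (hb : b < v) :
    (s.snoc b).val s.len = b := SeqLT.snoc_val_last (h.snoc_active s) hb

theorem slt_snoc (h : OrdH o) (s : SeqLT o v) {b : Ordinal.{u}} (hb : b < v) :
    s.slt (s.snoc b) := SeqLT.slt_snoc (h.snoc_active s) hb

theorem le_snoc (h : OrdH o) (s : SeqLT o v) {b : Ordinal.{u}} (hb : b < v) :
    s.le (s.snoc b) := SeqLT.le_snoc (h.snoc_active s) hb

end OrdH

/-! ### Unions of chains -/

section chainUnion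

variable {o v : Ordinal.{u}}

theorem chain_val {γ : Ordinal.{u}} {s : Ordinal.{u} → SeqLT o v}
    (hchain : ∀ α β, α ≤ β → β < γ → (s α).le (s β)) {α α' β : Ordinal.{u}}
    (hα : α < γ) (hα' : α' < γ) (hβ : β < (s α).len) (hβ' : β < (s α').len) :
    (s α).val β = (s α').val β := by
  rcases le_total α α' with hle | hle
  · exact (hchain α α' hle hα').2 β hβ
  · exact ((hchain α' α hle hα).2 β hβ').symm

open scoped Classical in
/-- The value function for unions of chains. -/
def chainUnionVal (γ : Ordinal.{u}) (s : Ordinal.{u} → SeqLT o v) (β : Ordinal.{u}) :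
    Ordinal.{u} :=
  if hx : ∃ α, α < γ ∧ β < (s α).len then (s hx.choose).val β else 0

theorem chainUnionVal_eq {γ : Ordinal.{u}} {s : Ordinal.{u} → SeqLT o v}
    (hchain : ∀ α β, α ≤ β → β < γ → (s α).le (s β)) {α β : Ordinal.{u}}
    (hα : α < γ) (hβ : β < (s α).len) : chainUnionVal γ s β = (s α).val β := by
  classical
  have hx : ∃ α, α < γ ∧ β < (s α).len := ⟨α, hα, hβ⟩
  rw [chainUnionVal, dif_pos hx]
  exact chain_val hchain hx.choose_spec.1 hα hx.choose_spec.2 hβ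

theorem chainUnionVal_zero {γ : Ordinal.{u}} {s : Ordinal.{u} → SeqLT o v} {β : Ordinal.{u}}
    (hx : ¬∃ α, α < γ ∧ β < (s α).len) : chainUnionVal γ s β = 0 := by
  classical
  rw [chainUnionVal, dif_neg]
  exact fun h => hx h

def chainUnion (γ : Ordinal.{u}) (s : Ordinal.{u} → SeqLT o v)
    (hb : Ordinal.bsup.{u, u} γ (fun α _ => (s α).len) < o ⊔ 1)
    (hchain : ∀ α β, α ≤ β → β < γ → (s α).le (s β)) : SeqLT o v where
  len := Ordinal.bsup.{u, u} γ fun α _ => (s α).len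
  len_lt := hb
  val := chainUnionVal γ s
  val_lt := fun β hβ => by
    obtain ⟨α, hα, hβα⟩ := (Ordinal.lt_bsup _).1 hβ
    rw [chainUnionVal_eq hchain hα hβα]
    exact (s α).val_lt β hβα
  val_zero := fun β hβ => by
    refine chainUnionVal_zero ?_
    rintro ⟨α, hα, hβα⟩
    exact absurd (lt_of_lt_of_le hβα (Ordinal.le_bsup (fun α _ => (s α).len) α hα))
      hβ.not_gt

theorem chainUnion_len {γ : Ordinal.{u}} {s : Ordinal.{u} → SeqLT o v} {hb} {hchain} :
    (chainUnion γ s hb hchain).len = Ordinal.bsup.{u, u} γ fun α _ => (s α).len := rfl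

theorem le_chainUnion {γ : Ordinal.{u}} {s : Ordinal.{u} → SeqLT o v}
    {hb} {hchain} {α : Ordinal.{u}} (hα : α < γ) :
    (s α).le (chainUnion γ s hb hchain) := by
  refine ⟨Ordinal.le_bsup _ α hα, fun β hβ => ?_⟩
  exact (chainUnionVal_eq hchain hα hβ).symm

theorem chainUnion_le {γ : Ordinal.{u}} {s : Ordinal.{u} → SeqLT o v}
    {hb} {hchain} {w : SeqLT o v} (hw : ∀ α, α < γ → (s α).le w) :
    (chainUnion γ s hb hchain).le w := by
  refine ⟨Ordinal.bsup_le fun α hα => (hw α hα).1, fun β hβ => ?_⟩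
  obtain ⟨α, hα, hβα⟩ := (Ordinal.lt_bsup _).1 hβ
  rw [show (chainUnion γ s hb hchain).val β = chainUnionVal γ s β from rfl,
    chainUnionVal_eq hchain hα hβα]
  exact (hw α hα).2 β hβα

theorem chainUnion_len_lt {γ : Ordinal.{u}} {s : Ordinal.{u} → SeqLT o v}
    {hb} {hchain} {β : Ordinal.{u}} (hβ : β < (chainUnion γ s hb hchain).len) :
    ∃ α, α < γ ∧ β < (s α).len := by
  obtain ⟨α, hα, hβα⟩ := (Ordinal.lt_bsup _).1 hβ
  exact ⟨α, hα, hβα⟩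

theorem OrdH.bsup_len_lt {o v : Ordinal.{u}} (h : OrdH o) {γ : Ordinal.{u}} (hγ : γ < o)
    (s : Ordinal.{u} → SeqLT o v) :
    Ordinal.bsup.{u, u} γ (fun α _ => (s α).len) < o ⊔ 1 := by
  obtain ⟨b, hb, hball⟩ := h.bd γ hγ (fun α => (s α).len) (fun α _ => h.len_lt _)
  rw [h.sup1]
  exact lt_of_le_of_lt (Ordinal.bsup_le fun α hα => hball α hα) hb

end chainUnion

end Aux2
section Aux3
open Ordinal

variable {o v : Ordinal.{u}}

/-! ### Strict chains of moves and their limits -/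

/-- The moves of `p` are strictly increasing below `γ`. -/
def StrictChain (p : Play o v) (γ : Ordinal.{u}) : Prop :=
  ∀ α β, α < β → β < γ → (p α).slt (p β)

theorem StrictChain.mono {p : Play o v} {γ γ' : Ordinal.{u}} (h : StrictChain p γ)
    (hγ : γ' ≤ γ) : StrictChain p γ' := fun α β hαβ hβ => h α β hαβ (lt_of_lt_of_le hβ hγ)

theorem StrictChain.le {p : Play o v} {γ : Ordinal.{u}} (h : StrictChain p γ)
    {α β : Ordinal.{u}} (hαβ : α ≤ β) (hβ : β < γ) : (p α).le (p β) := by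
  rcases eq_or_lt_of_le hαβ with rfl | hlt
  · exact SeqLT.le_refl _
  · exact (h α β hlt hβ).1

theorem StrictChain.stage_le_len (ho : OrdH o) {p : Play o v} (hc : StrictChain p o) :
    ∀ α, α < o → α ≤ (p α).len := by
  intro α
  induction α using Ordinal.induction with
  | _ α ih =>
    intro hα
    rcases Ordinal.zero_or_succ_or_isSuccLimit α with h0 | ⟨δ, rfl⟩ | hl
    · rw [h0]; exact zero_le
    · have hδα : δ < Order.succ δ := Order.lt_succ δ
      have hδ : δ < o := lt_trans hδα hα
      have h1 : δ ≤ (p δ).len := ih δ hδα hδ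
      have h2 : (p δ).len < (p (Order.succ δ)).len := (hc δ _ hδα hα).2
      exact Order.succ_le_of_lt (lt_of_le_of_lt h1 h2)
    · rw [(Order.IsSuccLimit.le_iff_forall_le hl : α ≤ (p α).len ↔ _)]
      intro δ hδ
      exact le_of_lt (lt_of_le_of_lt (ih δ hδ (lt_trans hδ hα)) (hc δ α hδ hα).2)

/-- The union of a complete run. -/
def playLim (hv : 0 < v) (p : Play o v) : SeqFull o v where
  val := fun β => if β < o ∧ β < (p (β + 1)).len then (p (β + 1)).val β else 0
  val_lt := fun β hβ => by
    show (if β < o ∧ β < (p (β + 1)).len then (p (β + 1)).val β else 0) < v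
    split
    · next h => exact (p (β + 1)).val_lt β h.2
    · next => exact hv
  val_zero := fun β hβ => by
    show (if β < o ∧ β < (p (β + 1)).len then (p (β + 1)).val β else 0) = 0
    rw [if_neg]; rintro ⟨h1, -⟩; exact absurd hβ h1.not_ge

theorem playLim_prefix (ho : OrdH o) {hv : 0 < v} {p : Play o v} (hc : StrictChain p o) :
    ∀ α, α < o → (p α).prefixOf (playLim hv p) := by
  intro α hα β hβ
  have hβo : β < o := lt_trans hβ (ho.len_lt _)
  have hβ1 : β < (p (β + 1)).len :=
    lt_of_lt_of_le (lt_of_lt_of_le (lt_add_one β) (le_refl _))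
      (hc.stage_le_len ho (β + 1) (ho.succ_lt hβo))
  show (p α).val β = if β < o ∧ β < (p (β + 1)).len then (p (β + 1)).val β else 0
  rw [if_pos ⟨hβo, hβ1⟩]
  rcases le_total α (β + 1) with hle | hle
  · exact (hc.le hle (ho.succ_lt hβo)).2 β hβ
  · exact ((hc.le hle hα).2 β hβ1).symm

theorem isOutcome_playLim (ho : OrdH o) {hv : 0 < v} {p : Play o v} (hc : StrictChain p o) :
    IsOutcome p (playLim hv p) := by
  refine ⟨playLim_prefix ho hc, fun β hβ => ⟨β + 1, ho.succ_lt hβ, ?_⟩⟩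
  exact lt_of_lt_of_le (lt_add_one β) (hc.stage_le_len ho (β + 1) (ho.succ_lt hβ))

theorem isOutcome_unique {p : Play o v} {x y : SeqFull o v} (hx : IsOutcome p x)
    (hy : IsOutcome p y) : x = y := by
  refine SeqFull.ext' fun β hβ => ?_
  obtain ⟨α, hα, hβα⟩ := hx.2 β hβ
  rw [← hx.1 α hα β hβα, ← hy.1 α hα β hβα]

theorem isOutcome_prefix {p : Play o v} {x : SeqFull o v} (hx : IsOutcome p x)
    {s : SeqLT o v} {α : Ordinal.{u}} (hα : α < o) (hs : s.le (p α)) : s.prefixOf x :=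
  SeqFull.prefixOf_of_le hs (hx.1 α hα)

/-! ### The generic run builder -/

open scoped Classical in
/-- Builds the run where player I moves according to `f` and player II according
to `g`. -/
noncomputable def mkRun (f g : Strat o v) : Play o v :=
  Ordinal.lt_wf.fix fun γ ih =>
    if EvenOrd γ then f γ (fun β => if hb : β < γ then ih β hb else SeqLT.empty o v)
    else g γ (fun β => if hb : β < γ then ih β hb else SeqLT.empty o v)

open scoped Classical in
theorem mkRun_eq (f g : Strat o v) (γ : Ordinal.{u}) :
    mkRun f g γ = if EvenOrd γ then f γ (resPlay (mkRun f g) γ)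
      else g γ (resPlay (mkRun f g) γ) := by
  have h : resPlay (mkRun f g) γ =
      fun β => if hb : β < γ then mkRun f g β else SeqLT.empty o v := by
    funext β
    rw [resPlay, dite_eq_ite]
  rw [h]
  conv_lhs => rw [mkRun, WellFounded.fix_eq]
  rfl

theorem mkRun_even {f g : Strat o v} {γ : Ordinal.{u}} (hγ : EvenOrd γ) :
    mkRun f g γ = f γ (resPlay (mkRun f g) γ) := by
  rw [mkRun_eq, if_pos hγ]

theorem mkRun_odd {f g : Strat o v} {γ : Ordinal.{u}} (hγ : OddOrd γ) :
    mkRun f g γ = g γ (resPlay (mkRun f g) γ) := by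
  rw [mkRun_eq, if_neg (fun h => not_evenOrd_and_oddOrd h hγ)]

theorem resPlay_lt {p : Play o v} {γ α : Ordinal.{u}} (hα : α < γ) : resPlay p γ α = p α :=
  if_pos hα

theorem resPlay_ge {p : Play o v} {γ α : Ordinal.{u}} (hα : γ ≤ α) :
    resPlay p γ α = SeqLT.empty o v := if_neg (not_lt.2 hα)

theorem resPlay_resPlay {p : Play o v} {γ γ' : Ordinal.{u}} (h : γ ≤ γ') :
    resPlay (resPlay p γ') γ = resPlay p γ := by
  funext α
  rcases lt_or_ge α γ with hα | hα
  · rw [resPlay_lt hα, resPlay_lt hα, resPlay_lt (lt_of_lt_of_le hα h)]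
  · rw [resPlay_ge hα, resPlay_ge hα]

theorem resPlay_congr {p q : Play o v} {γ : Ordinal.{u}} (h : ∀ α, α < γ → p α = q α) :
    resPlay p γ = resPlay q γ := by
  funext α
  rcases lt_or_ge α γ with hα | hα
  · rw [resPlay_lt hα, resPlay_lt hα, h α hα]
  · rw [resPlay_ge hα, resPlay_ge hα]

end Aux3
section Aux4
open Ordinal

variable {o : Ordinal.{u}}

theorem ordinal_two_pos : (0 : Ordinal.{u}) < 2 := by norm_num

theorem ordinal_one_lt_two : (1 : Ordinal.{u}) < 2 := by norm_num

theorem bit_flip_lt {b : Ordinal.{u}} : 1 - b < 2 :=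
  lt_of_le_of_lt (Ordinal.sub_le_self 1 b) ordinal_one_lt_two

theorem bit_flip_ne {b : Ordinal.{u}} (hb : b < 2) : 1 - b ≠ b := by
  rcases ordinal_lt_two_iff.1 hb with rfl | rfl
  · rw [Ordinal.sub_zero]; exact one_ne_zero
  · rw [Ordinal.sub_self]; exact zero_ne_one

theorem lt_two_mul_add_one_iff {α δ : Ordinal.{u}} : α < 2 * δ + 1 ↔ α ≤ 2 * δ := by
  rw [Ordinal.add_one_eq_succ, Order.lt_succ_iff]

theorem two_mul_lt_two_mul_add_one {δ : Ordinal.{u}} : 2 * δ < 2 * δ + 1 :=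
  lt_two_mul_add_one_iff.2 le_rfl

theorem OrdH.two_mul_lt (ho : OrdH o) {δ : Ordinal.{u}} (hδ : δ < o) : 2 * δ < o :=
  lt_trans two_mul_lt_two_mul_add_one (ho.mul2 δ hδ)

/-- `OrdH` holds at the ordinal of a regular uncountable cardinal. -/
theorem ordH_ord {l : Cardinal.{u}} (hreg : l.IsRegular) (hunc : Cardinal.aleph0 < l) :
    OrdH l.ord := by
  have hlim := Cardinal.isSuccLimit_ord hreg.aleph0_le
  have h2l : (2 : Cardinal.{u}) < l := lt_of_lt_of_le (Cardinal.nat_lt_aleph0 2) hunc.le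
  have h1l : (1 : Cardinal.{u}) < l := lt_of_lt_of_le (Cardinal.nat_lt_aleph0 1) hunc.le
  refine ⟨hlim, ?_, ?_⟩
  · intro γ hγ f hf
    refine ⟨Ordinal.bsup.{u, u} γ (fun α _ => f α), ?_, fun α hα => Ordinal.le_bsup _ α hα⟩
    apply Ordinal.bsup_lt_ord ?_ (fun i hi => hf i hi)
    rw [hreg.cof_eq]
    exact Cardinal.lt_ord.1 hγ
  · intro δ hδ
    rw [Cardinal.lt_ord] at hδ ⊢
    calc (2 * δ + 1).card = (2 * δ).card + (1 : Ordinal.{u}).card := Ordinal.card_add _ _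
      _ = (2 : Ordinal.{u}).card * δ.card + 1 := by rw [Ordinal.card_mul, Ordinal.card_one]
      _ < l := by
          apply Cardinal.add_lt_of_lt hreg.aleph0_le _ h1l
          apply Cardinal.mul_lt_of_lt hreg.aleph0_le _ hδ
          simpa using h2l

/-! ### Basic facts about positions in the perfect set game -/

theorem IsPosF.chain {t : SeqLT o 2} {p : Play o 2} {γ : Ordinal.{u}} (h : IsPosF t p γ) :
    StrictChain p γ := h.1

theorem isPosF_res {t : SeqLT o 2} {p : Play o 2} {γ γ' : Ordinal.{u}}
    (h : IsPosF t p γ) (hle : γ' ≤ γ) : IsPosF t (resPlay p γ') γ' := by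
  refine ⟨?_, ?_, ?_, ?_⟩
  · intro α β hαβ hβ
    rw [resPlay_lt (lt_trans hαβ hβ), resPlay_lt hβ]
    exact h.1 α β hαβ (lt_of_lt_of_le hβ hle)
  · intro h0
    rw [resPlay_lt h0]
    exact h.2.1 (lt_of_lt_of_le h0 hle)
  · intro α hα hα1
    rw [resPlay_lt hα1, resPlay_lt (lt_trans (lt_add_one α) hα1)]
    exact h.2.2.1 α hα (lt_of_lt_of_le hα1 hle)
  · intro α hα
    exact resPlay_ge hα

theorem outcome_mem_basicOpen {t : SeqLT o 2} {p : Play o 2} {x : SeqFull o 2}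
    (hpos : 0 < o) (h : IsPosF t p o) (hx : IsOutcome p x) : x ∈ basicOpen t :=
  isOutcome_prefix hx hpos (h.2.1 hpos)

/-! ### Player II wins when the target set is small -/

open scoped Classical in
/-- Player II's diagonalization strategy against the enumeration `e`. -/
noncomputable def sigII (o : Ordinal.{u}) (e : Ordinal.{u} → SeqFull o 2) : Strat o 2 :=
  fun γ p =>
    if h : OddOrd γ then
      (p (2 * h.choose)).snoc (1 - (e h.choose).val ((p (2 * h.choose)).len))
    else SeqLT.empty o 2

theorem sigII_eq (e : Ordinal.{u} → SeqFull o 2) (p : Play o 2) {δ : Ordinal.{u}} :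
    sigII o e (2 * δ + 1) p = (p (2 * δ)).snoc (1 - (e δ).val ((p (2 * δ)).len)) := by
  classical
  have h : OddOrd (2 * δ + 1) := ⟨δ, rfl⟩
  have hch : h.choose = δ := two_mul_add_one_inj h.choose_spec.symm
  rw [sigII, dif_pos h, hch]

theorem legalFII_sigII (ho : OrdH o) (t : SeqLT o 2) (e : Ordinal.{u} → SeqFull o 2) :
    LegalFII t (sigII o e) := by
  intro γ hγ hodd p _hp
  obtain ⟨δ, rfl⟩ := hodd
  rw [sigII_eq]
  set c := (p (2 * δ)).len
  have hb : 1 - (e δ).val c < 2 := bit_flip_lt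
  constructor
  · intro α hα
    have hα' : α ≤ 2 * δ := lt_two_mul_add_one_iff.1 hα
    rcases eq_or_lt_of_le hα' with rfl | hlt
    · exact ho.slt_snoc _ hb
    · exact SeqLT.slt_of_slt_of_le (_hp.1 α (2 * δ) hlt (lt_of_lt_of_le
        two_mul_lt_two_mul_add_one (le_refl _)))
        (ho.le_snoc _ hb)
  · intro δ' hδ'
    have : δ' = 2 * δ := by
      rw [Ordinal.add_one_eq_succ, Ordinal.add_one_eq_succ] at hδ'
      exact (Order.succ_injective hδ').symm
    subst this
    exact ho.snoc_len _ hb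

theorem winFII_of_enum (ho : OrdH o) {A : Set (SeqFull o 2)} {t : SeqLT o 2}
    (e : Ordinal.{u} → SeqFull o 2)
    (he : ∀ y ∈ A ∩ basicOpen t, ∃ δ, δ < o ∧ e δ = y) : WinFIIStrat t A := by
  refine ⟨sigII o e, legalFII_sigII ho t e, fun p hp hf => ?_⟩
  have hc : StrictChain p o := hp.1
  refine ⟨playLim ordinal_two_pos p, isOutcome_playLim ho hc, fun hxA => ?_⟩
  set x := playLim ordinal_two_pos p with hxdef
  have hxN : x ∈ basicOpen t := outcome_mem_basicOpen ho.lim.pos hp (isOutcome_playLim ho hc)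
  obtain ⟨δ, hδ, heδ⟩ := he x ⟨hxA, hxN⟩
  have hγ : 2 * δ + 1 < o := ho.mul2 δ hδ
  have h2δ : 2 * δ < 2 * δ + 1 := two_mul_lt_two_mul_add_one
  have hstep := hf (2 * δ + 1) hγ ⟨δ, rfl⟩
  rw [sigII_eq, resPlay_lt h2δ, heδ] at hstep
  set c := (p (2 * δ)).len with hcdef
  have hb : 1 - x.val c < 2 := bit_flip_lt
  have hlen : (p (2 * δ + 1)).len = c + 1 := by rw [hstep]; exact ho.snoc_len _ hb
  have hvlast : (p (2 * δ + 1)).val c = 1 - x.val c := by rw [hstep]; exact ho.snoc_val_last _ hb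
  have hpre : (p (2 * δ + 1)).prefixOf x := playLim_prefix ho hc _ hγ
  have hval := hpre c (by rw [hlen]; exact lt_add_one c)
  rw [hvlast] at hval
  exact bit_flip_ne (x.val_lt c (ho.len_lt _)) hval

end Aux4
section Aux5
open Ordinal

variable {o : Ordinal.{u}}

/-- The all-zero element of the generalized Baire space. -/
def zeroFull (o : Ordinal.{u}) : SeqFull o 2 where
  val := fun _ => 0
  val_lt := fun _ _ => ordinal_two_pos
  val_zero := fun _ _ => rfl

open scoped Classical in
theorem exists_enum {l : Cardinal.{u}} (S : Set (SeqFull l.ord 2))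
    (hS : Cardinal.mk ↥S ≤ Cardinal.lift.{u + 1} l) :
    ∃ e : Ordinal.{u} → SeqFull l.ord 2, ∀ y ∈ S, ∃ δ, δ < l.ord ∧ e δ = y := by
  rcases S.eq_empty_or_nonempty with rfl | ⟨y₀, hy₀⟩
  · exact ⟨fun _ => zeroFull l.ord, fun y hy => absurd hy (Set.notMem_empty y)⟩
  · have hle : Cardinal.mk ↥S ≤ Cardinal.mk ↥(Set.Iio l.ord) := by
      rw [Ordinal.mk_Iio_ordinal, Cardinal.card_ord]
      exact hS
    obtain ⟨f⟩ := Cardinal.le_def _ _ |>.1 hle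
    refine ⟨fun δ => if h : ∃ y : ↥S, (f y : Ordinal.{u}) = δ then (h.choose : ↥S).1
      else y₀, fun y hy => ?_⟩
    refine ⟨(f ⟨y, hy⟩ : Ordinal.{u}), (f ⟨y, hy⟩).2, ?_⟩
    have hex : ∃ y' : ↥S, (f y' : Ordinal.{u}) = (f ⟨y, hy⟩ : Ordinal.{u}) := ⟨⟨y, hy⟩, rfl⟩
    show (if h : ∃ y' : ↥S, (f y' : Ordinal.{u}) = (f ⟨y, hy⟩ : Ordinal.{u})
      then (h.choose : ↥S).1 else y₀) = y
    rw [dif_pos hex]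
    have h2 : f hex.choose = f ⟨y, hy⟩ := Subtype.ext hex.choose_spec
    rw [f.injective h2]

/-- A prefix of a branch restricted to a smaller length. -/
theorem res_le_of_prefixOf {v : Ordinal.{u}} {m : SeqLT o v} {x : SeqFull o v}
    (hm : m.prefixOf x) {α : Ordinal.{u}} (hα : α < o ⊔ 1) (hlen : α ≤ m.len) :
    (x.res α).le m := by
  refine ⟨by rw [SeqFull.res_len hα]; exact hlen, fun β hβ => ?_⟩
  rw [SeqFull.res_len hα] at hβ
  rw [SeqFull.res_val hα hβ, ← hm β (lt_of_lt_of_le hβ hlen)]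

/-! ### Perfect tree utilities -/

theorem chainUnion_mem (ho : OrdH o) {T : Set (SeqLT o 2)} (hT : IsPerfectTree T)
    {γ : Ordinal.{u}} (hγ : γ < o) {p : Play o 2} (hc : StrictChain p γ)
    (hmem : ∀ α, α < γ → p α ∈ T) {hb} {hch} : chainUnion γ p hb hch ∈ T := by
  obtain ⟨b, hbT, hble⟩ := hT.2.2.1 γ hγ p hc hmem
  exact hT.2.1 b hbT _ (chainUnion_le hble)

theorem exists_split_above (ho : OrdH o) {T : Set (SeqLT o 2)} (hT : IsPerfectTree T)
    {s : SeqLT o 2} (hs : s ∈ T) :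
    ∃ w ∈ T, s.le w ∧ s.len < w.len ∧ w.snoc 0 ∈ T ∧ w.snoc 1 ∈ T := by
  obtain ⟨t', ht'T, hst', t₁, ht₁T, t₂, ht₂T, hd₁, hd₂, hne⟩ := hT.2.2.2 s hs
  obtain ⟨w, hwT, ht₁w, w₁, hw₁T, w₂, hw₂T, he₁, he₂, hwne⟩ := hT.2.2.2 t₁ ht₁T
  have hsw : s.le w := SeqLT.le_trans (SeqLT.le_trans hst' hd₁.1.1) ht₁w
  have hslen : s.len < w.len := lt_of_le_of_lt hst'.1 (lt_of_lt_of_le hd₁.1.2 ht₁w.1)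
  have hb₁ : w₁.val w.len < 2 := w₁.val_lt _ (by rw [he₁.2]; exact lt_add_one _)
  have hb₂ : w₂.val w.len < 2 := w₂.val_lt _ (by rw [he₂.2]; exact lt_add_one _)
  have hrepr₁ : w₁ = w.snoc (w₁.val w.len) :=
    SeqLT.eq_snoc_of_slt (ho.snoc_active w) he₁.1.1 he₁.2
  have hrepr₂ : w₂ = w.snoc (w₂.val w.len) :=
    SeqLT.eq_snoc_of_slt (ho.snoc_active w) he₂.1.1 he₂.2
  have hbne : w₁.val w.len ≠ w₂.val w.len := by
    intro h
    exact hwne (by rw [hrepr₁, hrepr₂, h])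
  refine ⟨w, hwT, hsw, hslen, ?_, ?_⟩
  · rcases ordinal_lt_two_iff.1 hb₁ with h1 | h1 <;> rcases ordinal_lt_two_iff.1 hb₂ with h2 | h2
    · exact absurd (h1.trans h2.symm) hbne
    · rw [← h1, ← hrepr₁]; exact hw₁T
    · rw [← h2, ← hrepr₂]; exact hw₂T
    · exact absurd (h1.trans h2.symm) hbne
  · rcases ordinal_lt_two_iff.1 hb₁ with h1 | h1 <;> rcases ordinal_lt_two_iff.1 hb₂ with h2 | h2
    · exact absurd (h1.trans h2.symm) hbne
    · rw [← h2, ← hrepr₂]; exact hw₂T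
    · rw [← h1, ← hrepr₁]; exact hw₁T
    · exact absurd (h1.trans h2.symm) hbne

theorem exists_slt_in_tree (ho : OrdH o) {T : Set (SeqLT o 2)} (hT : IsPerfectTree T)
    {s : SeqLT o 2} (hs : s ∈ T) : ∃ w ∈ T, s.slt w := by
  obtain ⟨w, hwT, hsle, hslen, -, -⟩ := exists_split_above ho hT hs
  exact ⟨w, hwT, hsle, hslen⟩

open scoped Classical in
/-- A strategy that keeps extending inside the tree `T` above `s₀`. -/
noncomputable def extendStrat (T : Set (SeqLT o 2)) (s₀ : SeqLT o 2) : Strat o 2 :=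
  fun γ p =>
    if h : ∃ m, m ∈ T ∧ s₀.le m ∧ ∀ α, α < γ → (p α).slt m then h.choose
    else SeqLT.empty o 2

theorem exists_branch (ho : OrdH o) {T : Set (SeqLT o 2)} (hT : IsPerfectTree T)
    {s₀ : SeqLT o 2} (hs₀ : s₀ ∈ T) :
    ∃ x : SeqFull o 2, x ∈ treeBody T ∧ s₀.prefixOf x := by
  classical
  set f := extendStrat T s₀ with hfdef
  set br := mkRun f f with hbrdef
  have hbr : ∀ γ, mkRun f f γ = f γ (resPlay (mkRun f f) γ) := by
    intro γ
    rcases evenOrd_or_oddOrd γ with h | h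
    · exact mkRun_even h
    · exact mkRun_odd h
  have key : ∀ γ, γ < o → br γ ∈ T ∧ s₀.le (br γ) ∧ ∀ α, α < γ → (br α).slt (br γ) := by
    intro γ
    induction γ using Ordinal.induction with
    | _ γ ih =>
      intro hγ
      have hchain : StrictChain br γ := by
        intro α β hαβ hβ
        exact (ih β hβ (lt_trans hβ hγ)).2.2 α hαβ
      have hmem : ∀ α, α < γ → br α ∈ T := fun α hα => (ih α hα (lt_trans hα hγ)).1
      -- find a good candidate move
      have hex : ∃ m, m ∈ T ∧ s₀.le m ∧ ∀ α, α < γ → (br α).slt m := by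
        rcases eq_or_ne γ 0 with rfl | hγ0
        · obtain ⟨w, hwT, hsle, hslen, -, -⟩ := exists_split_above ho hT hs₀
          exact ⟨w, hwT, hsle, fun α hα => absurd hα not_lt_zero⟩
        · have hγpos : 0 < γ := pos_iff_ne_zero.2 hγ0
          have hch : ∀ α β, α ≤ β → β < γ → (br α).le (br β) := fun α β hle hβ =>
            hchain.le hle hβ
          have hbb := ho.bsup_len_lt hγ br
          set u := chainUnion γ br hbb hch with hudef
          have huT : u ∈ T := chainUnion_mem ho hT hγ hchain hmem
          obtain ⟨w, hwT, hule, hulen, -, -⟩ := exists_split_above ho hT huT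
          refine ⟨w, hwT, ?_, fun α hα => ?_⟩
          · exact SeqLT.le_trans (SeqLT.le_trans (ih 0 hγpos (lt_trans hγpos hγ)).2.1
              (le_chainUnion hγpos)) hule
          · refine SeqLT.slt_of_le_of_slt (le_chainUnion hα) ⟨hule, hulen⟩
      have hmove : br γ = f γ (resPlay br γ) := hbr γ
      have hex' : ∃ m, m ∈ T ∧ s₀.le m ∧ ∀ α, α < γ → ((resPlay br γ) α).slt m := by
        obtain ⟨m, h1, h2, h3⟩ := hex
        exact ⟨m, h1, h2, fun α hα => by rw [resPlay_lt hα]; exact h3 α hα⟩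
      have := hex'.choose_spec
      rw [hmove, hfdef]
      show (extendStrat T s₀ γ (resPlay br γ)) ∈ T ∧ _ ∧ _
      rw [extendStrat, dif_pos hex']
      refine ⟨this.1, this.2.1, fun α hα => ?_⟩
      have := this.2.2 α hα
      rwa [resPlay_lt hα] at this
  have hchain : StrictChain br o := fun α β hαβ hβ => (key β hβ).2.2 α hαβ
  set x := playLim ordinal_two_pos br with hxdef
  refine ⟨x, fun α hα => ?_, ?_⟩
  · -- x.res α ∈ T
    have hpre : (br α).prefixOf x := playLim_prefix ho hchain α hα
    have hlen : α ≤ (br α).len := hchain.stage_le_len ho α hα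
    exact hT.2.1 _ (key α hα).1 _ (res_le_of_prefixOf hpre (lt_of_lt_of_le hα le_sup_left) hlen)
  · exact SeqFull.prefixOf_of_le (key 0 ho.lim.pos).2.1 (playLim_prefix ho hchain 0 ho.lim.pos)

theorem exists_node_ge (ho : OrdH o) {T : Set (SeqLT o 2)} (hT : IsPerfectTree T)
    {t : SeqLT o 2} (hbody : ∀ x ∈ treeBody T, x ∈ basicOpen t) :
    ∃ m ∈ T, t.le m := by
  obtain ⟨s₀, hs₀⟩ := hT.1
  obtain ⟨x, hxT, -⟩ := exists_branch ho hT hs₀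
  have hxt : t.prefixOf x := hbody x hxT
  refine ⟨x.res t.len, hxT t.len (ho.len_lt t), SeqFull.le_res hxt t.len_lt le_rfl⟩

end Aux5
section Aux6
open Ordinal

variable {o : Ordinal.{u}}

/-- A good move for player I: legal, and staying on a splitting node of `T` whenever the
position so far lies in `T`. -/
def GoodI (t : SeqLT o 2) (T : Set (SeqLT o 2)) (p : Play o 2) (γ : Ordinal.{u})
    (m : SeqLT o 2) : Prop :=
  MoveOK t p γ m ∧ ((∀ α, α < γ → p α ∈ T) → m ∈ T ∧ m.snoc 0 ∈ T ∧ m.snoc 1 ∈ T)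

theorem existsGoodI (ho : OrdH o) {T : Set (SeqLT o 2)} (hT : IsPerfectTree T)
    {t : SeqLT o 2} (hbase : ∃ m₀ ∈ T, t.le m₀) {γ : Ordinal.{u}} (hγ : γ < o)
    {p : Play o 2} (hp : IsPosF t p γ) : ∃ m, GoodI t T p γ m := by
  have hchain : StrictChain p γ := hp.1
  have hch : ∀ α β, α ≤ β → β < γ → (p α).le (p β) := fun α β hle hβ => hchain.le hle hβ
  by_cases hall : ∀ α, α < γ → p α ∈ T
  · rcases eq_or_ne γ 0 with rfl | hγ0
    · obtain ⟨m₀, hm₀T, htm₀⟩ := hbase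
      obtain ⟨w, hwT, hle, hlen, hs0, hs1⟩ := exists_split_above ho hT hm₀T
      refine ⟨w, ⟨fun α hα => absurd hα not_lt_zero,
        fun _ => SeqLT.le_trans htm₀ hle⟩, fun _ => ⟨hwT, hs0, hs1⟩⟩
    · have hbb := ho.bsup_len_lt hγ p
      set u := chainUnion γ p hbb hch with hudef
      have huT : u ∈ T := chainUnion_mem ho hT hγ hchain hall
      obtain ⟨w, hwT, hle, hlen, hs0, hs1⟩ := exists_split_above ho hT huT
      refine ⟨w, ⟨fun α hα => SeqLT.slt_of_le_of_slt (le_chainUnion hα) ⟨hle, hlen⟩,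
        fun h0 => absurd h0 hγ0⟩, fun _ => ⟨hwT, hs0, hs1⟩⟩
  · have hγ0 : γ ≠ 0 := by
      intro h0
      exact hall (by rw [h0]; exact fun α hα => absurd hα not_lt_zero)
    have hbb := ho.bsup_len_lt hγ p
    set u := chainUnion γ p hbb hch with hudef
    refine ⟨u.snoc 0, ⟨fun α hα => SeqLT.slt_of_le_of_slt (le_chainUnion hα)
      (ho.slt_snoc u ordinal_two_pos), fun h0 => absurd h0 hγ0⟩,
      fun h => absurd h hall⟩

open scoped Classical in
/-- Player I's strategy from a perfect tree. -/
noncomputable def sigI (t : SeqLT o 2) (T : Set (SeqLT o 2)) : Strat o 2 := fun γ p =>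
  if h : ∃ m, GoodI t T p γ m then h.choose else SeqLT.empty o 2

theorem sigI_spec {t : SeqLT o 2} {T : Set (SeqLT o 2)} {γ : Ordinal.{u}} {p : Play o 2}
    (h : ∃ m, GoodI t T p γ m) : GoodI t T p γ (sigI t T γ p) := by
  classical
  rw [sigI, dif_pos h]
  exact h.choose_spec

theorem legalFI_sigI (ho : OrdH o) {T : Set (SeqLT o 2)} (hT : IsPerfectTree T)
    {t : SeqLT o 2} (hbase : ∃ m₀ ∈ T, t.le m₀) : LegalFI t (sigI t T) := by
  intro γ hγ _ p hp
  exact (sigI_spec (existsGoodI ho hT hbase hγ hp)).1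

theorem winFI_of_perfect (ho : OrdH o) {A : Set (SeqFull o 2)} {t : SeqLT o 2}
    (T : Set (SeqLT o 2)) (hT : IsPerfectTree T)
    (hbody : treeBody T ⊆ A ∩ basicOpen t) : WinFIStrat t A := by
  have hbase : ∃ m₀ ∈ T, t.le m₀ :=
    exists_node_ge ho hT (fun x hx => (hbody hx).2)
  refine ⟨sigI t T, legalFI_sigI ho hT hbase, fun p hp hf => ?_⟩
  have hchain : StrictChain p o := hp.1
  have key : ∀ γ, γ < o →
      p γ ∈ T ∧ (EvenOrd γ → (p γ).snoc 0 ∈ T ∧ (p γ).snoc 1 ∈ T) := by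
    intro γ
    induction γ using Ordinal.induction with
    | _ γ ih =>
      intro hγ
      rcases evenOrd_or_oddOrd γ with hev | hodd
      · have hmove : p γ = sigI t T γ (resPlay p γ) := hf γ hγ hev
        have hpos : IsPosF t (resPlay p γ) γ := isPosF_res hp hγ.le
        have hall : ∀ α, α < γ → (resPlay p γ) α ∈ T := fun α hα => by
          rw [resPlay_lt hα]; exact (ih α hα (lt_trans hα hγ)).1
        have hgood := (sigI_spec (existsGoodI ho hT hbase hγ hpos)).2 hall
        rw [hmove]
        exact ⟨hgood.1, fun _ => ⟨hgood.2.1, hgood.2.2⟩⟩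
      · obtain ⟨δ, hδev, rfl⟩ := oddOrd_dest hodd
        have hδ : δ < o := lt_trans (lt_add_one δ) hγ
        have hsn := (ih δ (lt_add_one δ) hδ).2 hδev
        have hlen : (p (δ + 1)).len = (p δ).len + 1 := hp.2.2.1 δ hδev hγ
        have hle : (p δ).le (p (δ + 1)) := (hp.1 δ (δ + 1) (lt_add_one δ) hγ).1
        have hrepr : p (δ + 1) = (p δ).snoc ((p (δ + 1)).val (p δ).len) :=
          SeqLT.eq_snoc_of_slt (ho.snoc_active (p δ)) hle hlen
        have hb : (p (δ + 1)).val (p δ).len < 2 :=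
          (p (δ + 1)).val_lt _ (by rw [hlen]; exact lt_add_one _)
        constructor
        · rcases ordinal_lt_two_iff.1 hb with h0 | h0 <;> rw [hrepr, h0]
          · exact hsn.1
          · exact hsn.2
        · intro hev'
          exact absurd hev' (fun h => not_evenOrd_and_oddOrd h hodd)
  set x := playLim ordinal_two_pos p with hxdef
  refine ⟨x, isOutcome_playLim ho hchain, (hbody ?_).1⟩
  intro α hα
  have hpre : (p α).prefixOf x := playLim_prefix ho hchain α hα
  have hlen : α ≤ (p α).len := hchain.stage_le_len ho α hα
  exact hT.2.1 _ (key α hα).1 _ (res_le_of_prefixOf hpre (lt_of_lt_of_le hα le_sup_left) hlen)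

end Aux6
section Aux7
open Ordinal

variable {o : Ordinal.{u}}

open scoped Classical in
/-- Player II's moves reading bits off `x` at the current coordinate. -/
noncomputable def bitII (x : SeqFull o 2) : Strat o 2 := fun γ p =>
  if h : OddOrd γ then (p (2 * h.choose)).snoc (x.val ((p (2 * h.choose)).len))
  else SeqLT.empty o 2

theorem bitII_eq (x : SeqFull o 2) (p : Play o 2) {δ : Ordinal.{u}} :
    bitII x (2 * δ + 1) p = (p (2 * δ)).snoc (x.val ((p (2 * δ)).len)) := by
  classical
  have h : OddOrd (2 * δ + 1) := ⟨δ, rfl⟩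
  have hch : h.choose = δ := two_mul_add_one_inj h.choose_spec.symm
  rw [bitII, dif_pos h, hch]

/-- The run of player I's strategy `σ` against player II reading bits off `x`. -/
noncomputable def runI (σ : Strat o 2) (x : SeqFull o 2) : Play o 2 := mkRun σ (bitII x)

theorem runI_even {σ : Strat o 2} {x : SeqFull o 2} {γ : Ordinal.{u}} (h : EvenOrd γ) :
    runI σ x γ = σ γ (resPlay (runI σ x) γ) := mkRun_even h

theorem runI_odd {σ : Strat o 2} {x : SeqFull o 2} {δ : Ordinal.{u}} :
    runI σ x (2 * δ + 1) =
      (runI σ x (2 * δ)).snoc (x.val ((runI σ x (2 * δ)).len)) := by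
  rw [runI, mkRun_odd ⟨δ, rfl⟩, bitII_eq, resPlay_lt two_mul_lt_two_mul_add_one]

/-- The stepwise requirements on a run. -/
def StepOK (t : SeqLT o 2) (q : Play o 2) (γ : Ordinal.{u}) : Prop :=
  (∀ α, α < γ → (q α).slt (q γ)) ∧ (γ = 0 → t.le (q γ)) ∧
    (∀ δ, EvenOrd δ → γ = δ + 1 → (q γ).len = (q δ).len + 1)

theorem isPosF_of_stepOK {t : SeqLT o 2} {q : Play o 2}
    {γ : Ordinal.{u}} (hγ : γ ≤ o) (hR : ∀ β, β < γ → StepOK t q β) :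
    IsPosF t (resPlay q γ) γ := by
  refine ⟨?_, ?_, ?_, fun α hα => resPlay_ge hα⟩
  · intro α β hαβ hβ
    rw [resPlay_lt (lt_trans hαβ hβ), resPlay_lt hβ]
    exact (hR β hβ).1 α hαβ
  · intro h0
    rw [resPlay_lt h0]
    exact (hR 0 h0).2.1 rfl
  · intro α hαe hα1
    rw [resPlay_lt hα1, resPlay_lt (lt_trans (lt_add_one α) hα1)]
    exact (hR (α + 1) hα1).2.2 α hαe rfl

theorem runI_stepOK {t : SeqLT o 2} (ho : OrdH o) {σ : Strat o 2} (hleg : LegalFI t σ)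
    (x : SeqFull o 2) : ∀ γ, γ < o → StepOK t (runI σ x) γ := by
  intro γ
  induction γ using Ordinal.induction with
  | _ γ ih =>
    intro hγ
    have hpos : IsPosF t (resPlay (runI σ x) γ) γ :=
      isPosF_of_stepOK hγ.le (fun β hβ => ih β hβ (lt_trans hβ hγ))
    rcases evenOrd_or_oddOrd γ with hev | hodd
    · have hmove := runI_even (σ := σ) (x := x) hev
      have hOK := hleg γ hγ hev _ hpos
      refine ⟨fun α hα => ?_, fun h0 => ?_, fun δ hδe hδ1 => ?_⟩
      · have := hOK.1 α hα
        rw [resPlay_lt hα] at this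
        rw [hmove]; exact this
      · rw [hmove]; exact hOK.2 h0
      · exact absurd (hδ1 ▸ hev) (fun h =>
          not_evenOrd_and_oddOrd h (oddOrd_succ_of_even hδe))
    · obtain ⟨e, rfl⟩ := hodd
      have h2e : 2 * e < 2 * e + 1 := two_mul_lt_two_mul_add_one
      have hmove := runI_odd (σ := σ) (x := x) (δ := e)
      have hc : (runI σ x (2 * e)).len < o := ho.len_lt _
      have hb : x.val ((runI σ x (2 * e)).len) < 2 := x.val_lt _ hc
      refine ⟨fun α hα => ?_, fun h0 => ?_, fun δ hδe hδ1 => ?_⟩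
      · have hα' : α ≤ 2 * e := lt_two_mul_add_one_iff.1 hα
        have hle : (runI σ x α).le (runI σ x (2 * e)) := by
          rcases eq_or_lt_of_le hα' with rfl | hlt
          · exact SeqLT.le_refl _
          · exact ((ih (2 * e) h2e (lt_trans h2e hγ)).1 α hlt).1
        rw [hmove]
        exact SeqLT.slt_of_le_of_slt hle (ho.slt_snoc _ hb)
      · exact absurd h0 (by
          rw [Ordinal.add_one_eq_succ]; exact Ordinal.succ_ne_zero _)
      · have hδ : δ = 2 * e := by
          rw [Ordinal.add_one_eq_succ, Ordinal.add_one_eq_succ] at hδ1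
          exact (Order.succ_injective hδ1).symm
        subst hδ
        rw [hmove]
        exact ho.snoc_len _ hb

theorem runI_chain {t : SeqLT o 2} (ho : OrdH o) {σ : Strat o 2} (hleg : LegalFI t σ)
    (x : SeqFull o 2) : StrictChain (runI σ x) o := fun α β hαβ hβ =>
  (runI_stepOK ho hleg x β hβ).1 α hαβ

theorem runI_le {t : SeqLT o 2} (ho : OrdH o) {σ : Strat o 2} (hleg : LegalFI t σ)
    (x : SeqFull o 2) {α β : Ordinal.{u}} (hαβ : α ≤ β) (hβ : β < o) :
    (runI σ x α).le (runI σ x β) := (runI_chain ho hleg x).le hαβ hβ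

theorem runI_isPosF {t : SeqLT o 2} (ho : OrdH o) {σ : Strat o 2} (hleg : LegalFI t σ)
    (x : SeqFull o 2) {γ : Ordinal.{u}} (hγ : γ ≤ o) :
    IsPosF t (resPlay (runI σ x) γ) γ :=
  isPosF_of_stepOK hγ (fun β hβ => runI_stepOK ho hleg x β (lt_of_lt_of_le hβ hγ))

/-- Lemma B: the value of a later move at a player II coordinate is the bit of `x` there. -/
theorem runI_bit {t : SeqLT o 2} (ho : OrdH o) {σ : Strat o 2} (hleg : LegalFI t σ)
    (x : SeqFull o 2) {e Γ : Ordinal.{u}} (hΓ : 2 * e + 1 ≤ Γ) (hΓo : Γ < o) :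
    (runI σ x Γ).val ((runI σ x (2 * e)).len) = x.val ((runI σ x (2 * e)).len) := by
  set c := (runI σ x (2 * e)).len with hcdef
  have hb : x.val c < 2 := x.val_lt _ (ho.len_lt _)
  have h1 : (runI σ x (2 * e + 1)).val c = x.val c := by
    rw [runI_odd]; exact ho.snoc_val_last _ hb
  have hle : (runI σ x (2 * e + 1)).le (runI σ x Γ) := runI_le ho hleg x hΓ hΓo
  have hlt : c < (runI σ x (2 * e + 1)).len := by
    rw [runI_odd, ho.snoc_len _ hb]; exact lt_add_one _
  rw [← hle.2 c hlt, h1]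

/-- Lemma A: runs agree while the bits read so far agree. -/
theorem runI_agree {σ : Strat o 2} {x x' : SeqFull o 2} {Γ : Ordinal.{u}}
    (hA : ∀ e, 2 * e + 1 ≤ Γ →
      x'.val ((runI σ x (2 * e)).len) = x.val ((runI σ x (2 * e)).len)) :
    ∀ β, β ≤ Γ → runI σ x' β = runI σ x β := by
  intro β
  induction β using Ordinal.induction with
  | _ β ih =>
    intro hβ
    rcases evenOrd_or_oddOrd β with hev | hodd
    · rw [runI_even hev, runI_even hev,
        resPlay_congr (fun α hα => ih α hα (le_trans (le_of_lt hα) hβ))]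
    · obtain ⟨e, rfl⟩ := hodd
      have h2e : 2 * e < 2 * e + 1 := two_mul_lt_two_mul_add_one
      have hpr : runI σ x' (2 * e) = runI σ x (2 * e) :=
        ih (2 * e) h2e (le_trans h2e.le hβ)
      rw [runI_odd, runI_odd, hpr, hA e hβ]

end Aux7
section Aux8
open Ordinal

variable {o : Ordinal.{u}}

/-- The tree of nodes reachable in runs of player I's strategy `σ`. -/
def TreeOf (σ : Strat o 2) : Set (SeqLT o 2) :=
  {s | ∃ x : SeqFull o 2, ∃ γ, γ < o ∧ s.le (runI σ x γ)}

/-- Extend a node to a full branch (by zeros). -/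
def toFull (s : SeqLT o 2) : SeqFull o 2 where
  val := fun β => if β < s.len ∧ β < o then s.val β else 0
  val_lt := fun β hβ => by
    show (if β < s.len ∧ β < o then s.val β else 0) < 2
    split
    · next h => exact s.val_lt β h.1
    · next => exact ordinal_two_pos
  val_zero := fun β hβ => by
    show (if β < s.len ∧ β < o then s.val β else 0) = 0
    rw [if_neg]; rintro ⟨-, h2⟩; exact absurd hβ h2.not_ge

theorem toFull_val (ho : OrdH o) {s : SeqLT o 2} {β : Ordinal.{u}} (hβ : β < s.len) :
    (toFull s).val β = s.val β := by
  show (if β < s.len ∧ β < o then s.val β else 0) = s.val β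
  rw [if_pos ⟨hβ, lt_trans hβ (ho.len_lt s)⟩]

/-- Modification of `x` at one coordinate. -/
def modifyFull (x : SeqFull o 2) (c b : Ordinal.{u}) (hb : b < 2) : SeqFull o 2 where
  val := fun β => if β = c ∧ β < o then b else x.val β
  val_lt := fun β hβ => by
    show (if β = c ∧ β < o then b else x.val β) < 2
    split
    · next => exact hb
    · next => exact x.val_lt β hβ
  val_zero := fun β hβ => by
    show (if β = c ∧ β < o then b else x.val β) = 0
    rw [if_neg, x.val_zero β hβ]
    rintro ⟨-, h2⟩; exact absurd hβ h2.not_ge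

theorem modifyFull_val_self {x : SeqFull o 2} {c b : Ordinal.{u}} {hb : b < 2}
    (hc : c < o) : (modifyFull x c b hb).val c = b := by
  show (if c = c ∧ c < o then b else x.val c) = b
  rw [if_pos ⟨rfl, hc⟩]

theorem modifyFull_val_ne {x : SeqFull o 2} {c b : Ordinal.{u}} {hb : b < 2}
    {β : Ordinal.{u}} (hβ : β ≠ c) : (modifyFull x c b hb).val β = x.val β := by
  show (if β = c ∧ β < o then b else x.val β) = x.val β
  rw [if_neg]; rintro ⟨h1, -⟩; exact hβ h1

variable {t : SeqLT o 2} {σ : Strat o 2}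

theorem treeOf_nonempty (ho : OrdH o) : (TreeOf σ).Nonempty :=
  ⟨runI σ (zeroFull o) 0, zeroFull o, 0, ho.lim.pos, SeqLT.le_refl _⟩

theorem treeOf_subtree : IsSubtree (TreeOf σ) := by
  intro s hs r hr
  obtain ⟨x, γ, hγ, hle⟩ := hs
  exact ⟨x, γ, hγ, SeqLT.le_trans hr hle⟩

theorem treeOf_closed (ho : OrdH o) (hleg : LegalFI t σ) : TreeClosed (TreeOf σ) := by
  intro γ hγ s hchain hmem
  rcases eq_or_ne γ 0 with rfl | hγ0
  · exact ⟨runI σ (zeroFull o) 0, ⟨zeroFull o, 0, ho.lim.pos, SeqLT.le_refl _⟩,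
      fun α hα => absurd hα not_lt_zero⟩
  have hsc : StrictChain s γ := hchain
  have hch : ∀ α β, α ≤ β → β < γ → (s α).le (s β) := fun α β hle hβ => hsc.le hle hβ
  have hbb := ho.bsup_len_lt hγ s
  set u := chainUnion γ s hbb hch with hudef
  set x := toFull u with hxdef
  have key : ∀ α, α < γ → (s α).le (runI σ x ((s α).len)) := by
    intro α hα
    obtain ⟨xα, g, hg, hsg⟩ := hmem α hα
    set ℓ := (s α).len with hldef
    have hℓo : ℓ < o := ho.len_lt (s α)
    set S : Set Ordinal.{u} := {Γ | ℓ ≤ (runI σ xα Γ).len} with hSdef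
    have hgS : g ∈ S := hsg.1
    have hinfS : sInf S ∈ S := csInf_mem ⟨g, hgS⟩
    have hinfg : sInf S ≤ g := csInf_le (OrderBot.bddBelow S) hgS
    have hinfo : sInf S < o := lt_of_le_of_lt hinfg hg
    have hagree : ∀ e, 2 * e + 1 ≤ sInf S →
        x.val ((runI σ xα (2 * e)).len) = xα.val ((runI σ xα (2 * e)).len) := by
      intro e he
      set c := (runI σ xα (2 * e)).len with hcdef
      have h2e : 2 * e < sInf S := lt_of_lt_of_le two_mul_lt_two_mul_add_one he
      have hclt : c < ℓ := by
        by_contra hcge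
        exact absurd (csInf_le (OrderBot.bddBelow S) (not_lt.1 hcge)) h2e.not_ge
      have h1 : x.val c = (s α).val c := by
        rw [hxdef, toFull_val ho (lt_of_lt_of_le hclt (le_chainUnion hα).1)]
        exact ((le_chainUnion hα).2 c hclt).symm
      have h2 : xα.val c = (s α).val c := by
        rw [← runI_bit ho hleg xα (le_trans he hinfg) hg]
        exact (hsg.2 c hclt).symm
      rw [h1, h2]
    have hrun := runI_agree hagree (sInf S) le_rfl
    have h3 : (s α).le (runI σ xα (sInf S)) :=
      SeqLT.le_of_le_le hsg (runI_le ho hleg xα hinfg hg) hinfS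
    rw [← hrun] at h3
    have hℓS : ℓ ∈ S := (runI_chain ho hleg xα).stage_le_len ho ℓ hℓo
    have hinfℓ : sInf S ≤ ℓ := csInf_le (OrderBot.bddBelow S) hℓS
    exact SeqLT.le_trans h3 (runI_le ho hleg x hinfℓ hℓo)
  have hΛ : u.len < o := ho.len_lt u
  have hub : ∀ α, α < γ → (s α).le (runI σ x u.len) := fun α hα =>
    SeqLT.le_trans (key α hα) (runI_le ho hleg x (le_chainUnion hα).1 hΛ)
  exact ⟨u, ⟨x, u.len, hΛ, chainUnion_le hub⟩, fun α hα => le_chainUnion hα⟩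

theorem treeOf_split (ho : OrdH o) (hleg : LegalFI t σ) :
    ∀ s ∈ TreeOf σ, ∃ w ∈ TreeOf σ, s.le w ∧
      ∃ t₁ ∈ TreeOf σ, ∃ t₂ ∈ TreeOf σ, IsDirectSucc w t₁ ∧ IsDirectSucc w t₂ ∧ t₁ ≠ t₂ := by
  intro s hs
  obtain ⟨x, γ₀, hγ₀, hsle⟩ := hs
  obtain ⟨e', he'γ₀, he'o⟩ : ∃ e', γ₀ ≤ 2 * e' ∧ 2 * e' < o := by
    rcases evenOrd_or_oddOrd γ₀ with h | h
    · obtain ⟨e, rfl⟩ := h; exact ⟨e, le_rfl, hγ₀⟩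
    · obtain ⟨e, rfl⟩ := h
      refine ⟨e + 1, ?_, ?_⟩
      · rw [mul_add, mul_one]
        exact add_le_add_right (by norm_num) _
      · have he : e < o := lt_of_le_of_lt
          (le_trans (by rw [one_mul]) (mul_le_mul_left one_le_two e)) (lt_trans
            two_mul_lt_two_mul_add_one hγ₀)
        have := ho.mul2 (e + 1) (ho.succ_lt he)
        exact lt_trans two_mul_lt_two_mul_add_one this
  set w := runI σ x (2 * e') with hwdef
  set c := w.len with hcdef
  have hco : c < o := ho.len_lt w
  have he'lt : e' < o := lt_of_le_of_lt
    (le_trans (by rw [one_mul]) (mul_le_mul_left one_le_two e')) he'o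
  have hsw : s.le w := SeqLT.le_trans hsle (runI_le ho hleg x he'γ₀ he'o)
  have hwT : w ∈ TreeOf σ := ⟨x, 2 * e', he'o, SeqLT.le_refl _⟩
  have hsucc : ∀ b, ∀ hb : b < 2, w.snoc b ∈ TreeOf σ := by
    intro b hb
    set xb := modifyFull x c b hb with hxbdef
    have hagree : ∀ e, 2 * e + 1 ≤ 2 * e' →
        xb.val ((runI σ x (2 * e)).len) = x.val ((runI σ x (2 * e)).len) := by
      intro e he
      apply modifyFull_val_ne
      have h2e : 2 * e < 2 * e' := lt_of_lt_of_le two_mul_lt_two_mul_add_one he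
      exact ((runI_chain ho hleg x) (2 * e) (2 * e') h2e he'o).2.ne
    have hrun := runI_agree hagree (2 * e') le_rfl
    have hmove : runI σ xb (2 * e' + 1) =
        (runI σ xb (2 * e')).snoc (xb.val ((runI σ xb (2 * e')).len)) := runI_odd
    rw [hrun] at hmove
    rw [show xb.val w.len = b from modifyFull_val_self hco] at hmove
    exact ⟨xb, 2 * e' + 1, ho.mul2 e' he'lt, hmove ▸ SeqLT.le_refl _⟩
  have hne : w.snoc 0 ≠ w.snoc 1 := by
    intro heq
    have h0 := ho.snoc_val_last w (b := 0) ordinal_two_pos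
    have h1 := ho.snoc_val_last w (b := 1) ordinal_one_lt_two
    rw [heq, h1] at h0
    exact one_ne_zero h0
  exact ⟨w, hwT, hsw, w.snoc 0, hsucc 0 ordinal_two_pos, w.snoc 1,
    hsucc 1 ordinal_one_lt_two,
    ⟨ho.slt_snoc w ordinal_two_pos, ho.snoc_len w ordinal_two_pos⟩,
    ⟨ho.slt_snoc w ordinal_one_lt_two, ho.snoc_len w ordinal_one_lt_two⟩, hne⟩

theorem isPerfectTree_treeOf (ho : OrdH o) (hleg : LegalFI t σ) :
    IsPerfectTree (TreeOf σ) :=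
  ⟨treeOf_nonempty ho, treeOf_subtree, treeOf_closed ho hleg, treeOf_split ho hleg⟩

end Aux8
section Aux9
open Ordinal

variable {o : Ordinal.{u}}

theorem treeOf_body (ho : OrdH o) {A : Set (SeqFull o 2)} {t : SeqLT o 2} {σ : Strat o 2}
    (hleg : LegalFI t σ)
    (hwin : ∀ p : Play o 2, IsPosF t p o → FollowsI σ p o → ∃ x, IsOutcome p x ∧ x ∈ A) :
    treeBody (TreeOf σ) ⊆ A ∩ basicOpen t := by
  intro y hy
  set q := runI σ y with hqdef
  have hchain : StrictChain q o := runI_chain ho hleg y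
  have key : ∀ γ, γ < o → (q γ).prefixOf y := by
    intro γ
    induction γ using Ordinal.induction with
    | _ γ ih =>
      intro hγ
      rcases evenOrd_or_oddOrd γ with hev | hodd
      · have hmove : q γ = σ γ (resPlay q γ) := runI_even hev
        set m := q γ with hm
        set α := m.len with hα
        have hαo : α < o := ho.len_lt m
        have hα1 : α < o ⊔ 1 := lt_of_lt_of_le hαo le_sup_left
        have hOK : MoveOK t (resPlay q γ) γ (σ γ (resPlay q γ)) :=
          hleg γ hγ hev _ (runI_isPosF ho hleg y hγ.le)
        rw [← hmove] at hOK
        obtain ⟨x', Γ', hΓ', hyres⟩ := hy α hαo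
        have inner : ∀ β, β ≤ γ → β ≤ Γ' → runI σ x' β = q β := by
          intro β
          induction β using Ordinal.induction with
          | _ β ihb =>
            intro hβγ hβΓ
            rcases evenOrd_or_oddOrd β with hbe | hbo
            · rw [runI_even hbe, show q β = σ β (resPlay q β) from runI_even hbe]
              rw [resPlay_congr (fun δ hδ => ihb δ hδ (le_trans hδ.le hβγ)
                (le_trans hδ.le hβΓ))]
            · obtain ⟨e, rfl⟩ := hbo
              have h2e : 2 * e < 2 * e + 1 := two_mul_lt_two_mul_add_one
              have hpr : runI σ x' (2 * e) = q (2 * e) :=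
                ihb (2 * e) h2e (le_trans h2e.le hβγ) (le_trans h2e.le hβΓ)
              have h2eγ : 2 * e < γ := lt_of_lt_of_le h2e hβγ
              set c := (q (2 * e)).len with hcdef
              have hcα : c < α := by
                have := hOK.1 (2 * e) h2eγ
                rw [resPlay_lt h2eγ] at this
                exact this.2
              have hbit : x'.val c = y.val c := by
                have hB := runI_bit ho hleg x' (e := e) (Γ := Γ') hβΓ hΓ'
                rw [hpr] at hB
                rw [← hB]
                have hlenres : (y.res α).len = α := SeqFull.res_len hα1
                have h1 := hyres.2 c (by rw [hlenres]; exact hcα)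
                rw [SeqFull.res_val hα1 hcα] at h1
                exact h1.symm
              show runI σ x' (2 * e + 1) = q (2 * e + 1)
              rw [runI_odd, show q (2 * e + 1) =
                (q (2 * e)).snoc (y.val ((q (2 * e)).len)) from runI_odd, hpr, hbit]
        have hΓγ : γ ≤ Γ' := by
          by_contra hlt
          push_neg at hlt
          have heq := inner Γ' hlt.le le_rfl
          have hslt := hOK.1 Γ' hlt
          rw [resPlay_lt hlt] at hslt
          have hge : α ≤ (q Γ').len := by
            rw [← heq]
            exact le_trans (le_of_eq (SeqFull.res_len hα1).symm) hyres.1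
          exact absurd hslt.2 hge.not_gt
        have hqγ : runI σ x' γ = q γ := inner γ le_rfl hΓγ
        have hmM : m.le (runI σ x' Γ') := by
          rw [hm, ← hqγ]
          exact runI_le ho hleg x' hΓγ hΓ'
        have hmres : m = y.res α :=
          SeqLT.eq_of_le_le_len hmM hyres (by rw [SeqFull.res_len hα1])
        rw [hm] at hmres ⊢
        rw [hmres]
        exact SeqFull.res_prefixOf y α
      · obtain ⟨e, rfl⟩ := hodd
        have h2e : 2 * e < 2 * e + 1 := two_mul_lt_two_mul_add_one
        have h2eo : 2 * e < o := lt_trans h2e hγ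
        set c := (q (2 * e)).len with hcdef
        have hb : y.val c < 2 := y.val_lt c (ho.len_lt _)
        have hmove : q (2 * e + 1) = (q (2 * e)).snoc (y.val c) := runI_odd
        intro β hβ
        rw [hmove, ho.snoc_len _ hb] at hβ
        have hβc : β ≤ c := by rwa [Ordinal.add_one_eq_succ, Order.lt_succ_iff] at hβ
        rcases eq_or_lt_of_le hβc with rfl | hlt
        · rw [hmove, ho.snoc_val_last _ hb]
        · rw [hmove, SeqLT.snoc_val_of_lt (ho.snoc_active _) hb hlt]
          exact ih (2 * e) h2e h2eo β hlt
  have hyout : IsOutcome (resPlay q o) y := by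
    constructor
    · intro α hα
      rw [resPlay_lt hα]
      exact key α hα
    · intro β hβ
      refine ⟨β + 1, ho.succ_lt hβ, ?_⟩
      rw [resPlay_lt (ho.succ_lt hβ)]
      exact lt_of_lt_of_le (lt_add_one β) (hchain.stage_le_len ho _ (ho.succ_lt hβ))
  have hfol : FollowsI σ (resPlay q o) o := by
    intro α hα hαe
    rw [resPlay_lt hα, resPlay_resPlay hα.le]
    exact runI_even hαe
  obtain ⟨z, hzout, hzA⟩ := hwin (resPlay q o) (runI_isPosF ho hleg y le_rfl) hfol
  have hzy : z = y := isOutcome_unique hzout hyout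
  rw [hzy] at hzA
  refine ⟨hzA, ?_⟩
  have ht0 : t.le (q 0) := by
    have := (runI_isPosF ho hleg y (le_refl o)).2.1 ho.lim.pos
    rwa [resPlay_lt ho.lim.pos] at this
  exact SeqFull.prefixOf_of_le ht0 (key 0 ho.lim.pos)

theorem winFI_iff_perfect (ho : OrdH o) {A : Set (SeqFull o 2)} {t : SeqLT o 2} :
    WinFIStrat t A ↔
      ∃ T : Set (SeqLT o 2), IsPerfectTree T ∧ treeBody T ⊆ A ∩ basicOpen t := by
  constructor
  · rintro ⟨σ, hleg, hwin⟩
    exact ⟨TreeOf σ, isPerfectTree_treeOf ho hleg, treeOf_body ho hleg hwin⟩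
  · rintro ⟨T, hT, hbody⟩
    exact winFI_of_perfect ho T hT hbody

end Aux9
section Aux10
open Ordinal

variable {o : Ordinal.{u}}

/-- Append a move at position `γ`. -/
def appendPlay (p : Play o 2) (γ : Ordinal.{u}) (m : SeqLT o 2) : Play o 2 :=
  fun α => if α < γ then p α else if α = γ then m else SeqLT.empty o 2

theorem appendPlay_lt {p : Play o 2} {γ α : Ordinal.{u}} {m : SeqLT o 2} (h : α < γ) :
    appendPlay p γ m α = p α := by rw [appendPlay, if_pos h]

theorem appendPlay_self {p : Play o 2} {γ : Ordinal.{u}} {m : SeqLT o 2} :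
    appendPlay p γ m γ = m := by rw [appendPlay, if_neg (lt_irrefl γ), if_pos rfl]

theorem appendPlay_resPlay {r : Play o 2} {δ : Ordinal.{u}} :
    appendPlay (resPlay r δ) δ (r δ) = resPlay r (δ + 1) := by
  funext α
  rcases lt_trichotomy α δ with h | rfl | h
  · rw [appendPlay, if_pos h, resPlay_lt h, resPlay_lt (lt_trans h (lt_add_one δ))]
  · rw [appendPlay_self, resPlay_lt (lt_add_one α)]
  · rw [appendPlay, if_neg (not_lt.2 h.le), if_neg h.ne',
      resPlay_ge (by rwa [Ordinal.add_one_eq_succ, Order.succ_le_iff])]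

/-- A candidate length `β` for player I chasing `x` at an even position. -/
def Cand (t : SeqLT o 2) (σ : Strat o 2) (x : SeqFull o 2) (p : Play o 2)
    (γ β : Ordinal.{u}) : Prop :=
  β < o ∧ t.len ≤ β ∧ (∀ α, α < γ → (p α).slt (x.res β)) ∧
    (σ (γ + 1) (appendPlay p γ (x.res β))).prefixOf x

open scoped Classical in
/-- Player I's strategy chasing `x` against `σ`. -/
noncomputable def chaseI (t : SeqLT o 2) (σ : Strat o 2) (x : SeqFull o 2) : Strat o 2 :=
  fun γ p =>
    if h : ∃ β, Cand t σ x p γ β then x.res (sInf {β | Cand t σ x p γ β})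
    else SeqLT.empty o 2

theorem chaseI_eq {t : SeqLT o 2} {σ : Strat o 2} {x : SeqFull o 2} {γ : Ordinal.{u}}
    {p : Play o 2} (h : ∃ β, Cand t σ x p γ β) :
    chaseI t σ x γ p = x.res (sInf {β | Cand t σ x p γ β}) := by
  classical
  rw [chaseI, dif_pos h]

/-- The run of `chaseI` against player II's strategy `σ`. -/
noncomputable def chaseRun (t : SeqLT o 2) (σ : Strat o 2) (x : SeqFull o 2) : Play o 2 :=
  mkRun (chaseI t σ x) σ

/-- The set of stages at which the chase gets stuck. -/
def stopSet (t : SeqLT o 2) (σ : Strat o 2) (x : SeqFull o 2) : Set Ordinal.{u} :=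
  {γ | EvenOrd γ ∧ γ < o ∧ ¬∃ β, Cand t σ x (resPlay (chaseRun t σ x) γ) γ β}

theorem isPosF_append (ho : OrdH o) {t : SeqLT o 2} {p : Play o 2} {γ : Ordinal.{u}}
    (hγ : EvenOrd γ) (hpos : IsPosF t p γ) {m : SeqLT o 2}
    (hslt : ∀ α, α < γ → (p α).slt m) (ht : γ = 0 → t.le m) :
    IsPosF t (appendPlay p γ m) (γ + 1) := by
  have hγ1 : ∀ α, α < γ + 1 → α ≤ γ := fun α hα => by
    rwa [Ordinal.add_one_eq_succ, Order.lt_succ_iff] at hα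
  refine ⟨?_, ?_, ?_, ?_⟩
  · intro α β hαβ hβ
    rcases eq_or_lt_of_le (hγ1 β hβ) with rfl | hβγ
    · rw [appendPlay_self, appendPlay_lt hαβ]
      exact hslt α hαβ
    · rw [appendPlay_lt hβγ, appendPlay_lt (lt_trans hαβ hβγ)]
      exact hpos.1 α β hαβ hβγ
  · intro h0
    rcases eq_or_ne γ 0 with rfl | hne
    · rw [appendPlay_self]
      exact ht rfl
    · rw [appendPlay_lt (pos_iff_ne_zero.2 hne)]
      exact hpos.2.1 (pos_iff_ne_zero.2 hne)
  · intro α hαe hα1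
    have hαγ : α + 1 ≤ γ := hγ1 (α + 1) hα1
    rcases eq_or_lt_of_le hαγ with rfl | hlt
    · exact absurd hγ (fun h => not_evenOrd_and_oddOrd h (oddOrd_succ_of_even hαe))
    · rw [appendPlay_lt hlt, appendPlay_lt (lt_trans (lt_add_one α) hlt)]
      exact hpos.2.2.1 α hαe hlt
  · intro α hα
    rw [appendPlay, if_neg, if_neg]
    · intro h
      rw [h] at hα
      exact absurd hα (by
        rw [Ordinal.add_one_eq_succ]
        exact (Order.lt_succ γ).not_ge)
    · exact not_lt.2 (le_trans (le_trans (lt_add_one γ).le hα) le_rfl)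

/-- Below the first stuck stage, the chase run behaves well. -/
theorem chase_step (ho : OrdH o) {t : SeqLT o 2} {σ : Strat o 2} (hleg : LegalFII t σ)
    {x : SeqFull o 2} (hx : t.prefixOf x) :
    ∀ γ, γ < o → (∀ δ, δ ≤ γ → δ ∉ stopSet t σ x) →
      StepOK t (chaseRun t σ x) γ ∧ (chaseRun t σ x γ).prefixOf x := by
  set r := chaseRun t σ x with hrdef
  intro γ
  induction γ using Ordinal.induction with
  | _ γ ih =>
    intro hγ hno
    have ihall : ∀ δ, δ < γ → StepOK t r δ ∧ (r δ).prefixOf x := fun δ hδ =>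
      ih δ hδ (lt_trans hδ hγ) (fun δ' hδ' => hno δ' (le_trans hδ' hδ.le))
    rcases evenOrd_or_oddOrd γ with hev | hodd
    · have hcand : ∃ β, Cand t σ x (resPlay r γ) γ β := by
        by_contra hc
        exact hno γ le_rfl ⟨hev, hγ, hc⟩
      have hmove : r γ = x.res (sInf {β | Cand t σ x (resPlay r γ) γ β}) := by
        rw [hrdef, chaseRun, mkRun_even hev]
        exact chaseI_eq hcand
      have hc0 : Cand t σ x (resPlay r γ) γ (sInf {β | Cand t σ x (resPlay r γ) γ β}) :=
        csInf_mem hcand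
      constructor
      · refine ⟨fun α hα => ?_, fun h0 => ?_, fun δ hδe hδ1 => ?_⟩
        · have := hc0.2.2.1 α hα
          rw [resPlay_lt hα] at this
          rw [hmove]; exact this
        · rw [hmove]
          exact SeqFull.le_res hx (lt_of_lt_of_le hc0.1 le_sup_left) hc0.2.1
        · exact absurd (hδ1 ▸ hev) (fun h =>
            not_evenOrd_and_oddOrd h (oddOrd_succ_of_even hδe))
      · rw [hmove]
        exact SeqFull.res_prefixOf x _
    · obtain ⟨δ, hδev, rfl⟩ := oddOrd_dest hodd
      have hδγ : δ < δ + 1 := lt_add_one δ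
      have hδo : δ < o := lt_trans hδγ hγ
      have hpos : IsPosF t (resPlay r (δ + 1)) (δ + 1) :=
        isPosF_of_stepOK hγ.le (fun β hβ => (ihall β hβ).1)
      have hmove : r (δ + 1) = σ (δ + 1) (resPlay r (δ + 1)) := by
        rw [hrdef, chaseRun]
        exact mkRun_odd (oddOrd_succ_of_even hδev)
      have hOK : MoveOKFII (resPlay r (δ + 1)) (δ + 1) (σ (δ + 1) (resPlay r (δ + 1))) :=
        hleg (δ + 1) hγ (oddOrd_succ_of_even hδev) _ hpos
      constructor
      · refine ⟨fun α hα => ?_, fun h0 => ?_, fun δ' hδ'e hδ'1 => ?_⟩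
        · have := hOK.1 α hα
          rw [resPlay_lt hα] at this
          rw [hmove]; exact this
        · exact absurd h0 (by
            rw [Ordinal.add_one_eq_succ]; exact Ordinal.succ_ne_zero _)
        · have hδδ' : δ' = δ := by
            rw [Ordinal.add_one_eq_succ, Ordinal.add_one_eq_succ] at hδ'1
            exact (Order.succ_injective hδ'1).symm
          subst hδδ'
          have := hOK.2 δ' rfl
          rw [resPlay_lt hδγ] at this
          rw [hmove]; exact this
      · -- the response is a prefix of x, by the choice of the candidate at stage δ
        have hcandδ : ∃ β, Cand t σ x (resPlay r δ) δ β := by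
          by_contra hc
          exact hno δ hδγ.le ⟨hδev, hδo, hc⟩
        have hmoveδ : r δ = x.res (sInf {β | Cand t σ x (resPlay r δ) δ β}) := by
          rw [hrdef, chaseRun, mkRun_even hδev]
          exact chaseI_eq hcandδ
        have hcδ := csInf_mem hcandδ
        rw [hmove, ← appendPlay_resPlay, hmoveδ]
        exact hcδ.2.2.2

theorem chase_stop_nonempty (ho : OrdH o) {t : SeqLT o 2} {σ : Strat o 2}
    {A : Set (SeqFull o 2)} (hleg : LegalFII t σ)
    (hwin : ∀ p : Play o 2, IsPosF t p o → FollowsII σ p o → ∃ z, IsOutcome p z ∧ z ∉ A)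
    {x : SeqFull o 2} (hxA : x ∈ A) (hx : t.prefixOf x) :
    (stopSet t σ x).Nonempty := by
  set r := chaseRun t σ x with hrdef
  by_contra hn
  rw [Set.not_nonempty_iff_eq_empty] at hn
  have hgood : ∀ γ, γ < o → StepOK t r γ ∧ (r γ).prefixOf x := fun γ hγ =>
    chase_step ho hleg hx γ hγ (fun δ _ => by rw [hn]; exact Set.notMem_empty δ)
  have hchain : StrictChain r o := fun α β h1 h2 => (hgood β h2).1.1 α h1
  have hpos : IsPosF t (resPlay r o) o :=
    isPosF_of_stepOK le_rfl (fun β hβ => (hgood β hβ).1)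
  have hfol : FollowsII σ (resPlay r o) o := by
    intro α hα hodd
    rw [resPlay_lt hα, resPlay_resPlay hα.le]
    exact mkRun_odd hodd
  obtain ⟨z, hzout, hzA⟩ := hwin _ hpos hfol
  have hxout : IsOutcome (resPlay r o) x := by
    constructor
    · intro α hα
      rw [resPlay_lt hα]
      exact (hgood α hα).2
    · intro β hβ
      refine ⟨β + 1, ho.succ_lt hβ, ?_⟩
      rw [resPlay_lt (ho.succ_lt hβ)]
      exact lt_of_lt_of_le (lt_add_one β) (hchain.stage_le_len ho _ (ho.succ_lt hβ))
  exact hzA (by rw [isOutcome_unique hzout hxout]; exact hxA)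

end Aux10
section Aux11
open Ordinal

variable {o : Ordinal.{u}}

theorem SeqFull.res_congr {v : Ordinal.{u}} {x x' : SeqFull o v} {β : Ordinal.{u}}
    (h : ∀ c, c < β → x.val c = x'.val c) : x.res β = x'.res β := by
  by_cases hβ : β < o ⊔ 1
  · refine SeqLT.ext' (by rw [SeqFull.res_len hβ, SeqFull.res_len hβ]) (fun c hc => ?_)
    rw [SeqFull.res_len hβ] at hc
    rw [SeqFull.res_val hβ hc, SeqFull.res_val hβ hc, h c hc]
  · rw [SeqFull.res, dif_neg hβ, SeqFull.res, dif_neg hβ]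

variable {t : SeqLT o 2} {σ : Strat o 2}

theorem chase_response (ho : OrdH o) (hleg : LegalFII t σ) {x : SeqFull o 2}
    (hx : t.prefixOf x) {p : Play o 2} {γ β : Ordinal.{u}}
    (hγo : γ + 1 < o) (hγe : EvenOrd γ) (hpos : IsPosF t p γ) (hβo : β < o)
    (htβ : t.len ≤ β) (hslt : ∀ α, α < γ → (p α).slt (x.res β)) :
    (σ (γ + 1) (appendPlay p γ (x.res β))).len = β + 1 ∧
      (x.res β).le (σ (γ + 1) (appendPlay p γ (x.res β))) := by
  have hβ1 : β < o ⊔ 1 := lt_of_lt_of_le hβo le_sup_left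
  have hposext : IsPosF t (appendPlay p γ (x.res β)) (γ + 1) :=
    isPosF_append ho hγe hpos hslt
      (fun h0 => by subst h0; exact SeqFull.le_res hx hβ1 htβ)
  have hOK := hleg (γ + 1) hγo (oddOrd_succ_of_even hγe) _ hposext
  constructor
  · have := hOK.2 γ rfl
    rw [appendPlay_self] at this
    rw [this, SeqFull.res_len hβ1]
  · have := hOK.1 γ (lt_add_one γ)
    rw [appendPlay_self] at this
    exact this.1

theorem cand_iff (ho : OrdH o) (hleg : LegalFII t σ) {x : SeqFull o 2}
    (hx : t.prefixOf x) {p : Play o 2} {γ β : Ordinal.{u}}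
    (hγo : γ + 1 < o) (hγe : EvenOrd γ) (hpos : IsPosF t p γ) (hβo : β < o)
    (htβ : t.len ≤ β) (hslt : ∀ α, α < γ → (p α).slt (x.res β)) :
    Cand t σ x p γ β ↔ (σ (γ + 1) (appendPlay p γ (x.res β))).val β = x.val β := by
  obtain ⟨hlen, hge⟩ := chase_response ho hleg hx hγo hγe hpos hβo htβ hslt
  have hβ1 : β < o ⊔ 1 := lt_of_lt_of_le hβo le_sup_left
  constructor
  · intro hc
    exact hc.2.2.2 β (by rw [hlen]; exact lt_add_one β)
  · intro hbit
    refine ⟨hβo, htβ, hslt, fun c hc => ?_⟩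
    rw [hlen] at hc
    have hcβ : c ≤ β := by rwa [Ordinal.add_one_eq_succ, Order.lt_succ_iff] at hc
    rcases eq_or_lt_of_le hcβ with rfl | hlt
    · exact hbit
    · rw [← hge.2 c (by rw [SeqFull.res_len hβ1]; exact hlt), SeqFull.res_val hβ1 hlt]

theorem cand_congr (ho : OrdH o) (hleg : LegalFII t σ) {x x' : SeqFull o 2}
    (hx : t.prefixOf x) (hx' : t.prefixOf x') {p : Play o 2} {γ β : Ordinal.{u}}
    (hγo : γ + 1 < o) (hγe : EvenOrd γ) (hpos : IsPosF t p γ)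
    (hagree : ∀ c, c ≤ β → x.val c = x'.val c) (hc : Cand t σ x p γ β) :
    Cand t σ x' p γ β := by
  obtain ⟨hβo, htβ, hslt, hpre⟩ := hc
  have hres : x.res β = x'.res β := SeqFull.res_congr (fun c hcβ => hagree c hcβ.le)
  have hslt' : ∀ α, α < γ → (p α).slt (x'.res β) := by rw [← hres]; exact hslt
  rw [cand_iff ho hleg hx' hγo hγe hpos hβo htβ hslt', ← hres, ← hagree β le_rfl]
  exact (cand_iff ho hleg hx hγo hγe hpos hβo htβ hslt).1 ⟨hβo, htβ, hslt, hpre⟩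

theorem snoc_inj (ho : OrdH o) {s s' : SeqLT o 2} {b b' : Ordinal.{u}} (hb : b < 2)
    (hb' : b' < 2) (h : s.snoc b = s'.snoc b') : s = s' ∧ b = b' := by
  have hlen : s.len = s'.len := by
    have := congrArg SeqLT.len h
    rw [ho.snoc_len _ hb, ho.snoc_len _ hb', Ordinal.add_one_eq_succ,
      Ordinal.add_one_eq_succ] at this
    exact Order.succ_injective this
  have hss : s = s' := by
    refine SeqLT.ext' hlen (fun c hc => ?_)
    have := congrArg (fun z => SeqLT.val z c) h
    rwa [SeqLT.snoc_val_of_lt (ho.snoc_active s) hb hc,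
      SeqLT.snoc_val_of_lt (ho.snoc_active s') hb' (hlen ▸ hc)] at this
  refine ⟨hss, ?_⟩
  have := congrArg (fun z => SeqLT.val z s.len) h
  rwa [ho.snoc_val_last s hb, hss, ho.snoc_val_last s' hb'] at this

end Aux11
section Aux12
open Ordinal

variable {o : Ordinal.{u}}

theorem winFII_inj (ho : OrdH o) {A : Set (SeqFull o 2)} {t : SeqLT o 2} {σ : Strat o 2}
    (hleg : LegalFII t σ)
    (hwin : ∀ p : Play o 2, IsPosF t p o → FollowsII σ p o → ∃ z, IsOutcome p z ∧ z ∉ A) :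
    ∃ F : ↥(A ∩ basicOpen t) → SeqLT o 2, Function.Injective F := by
  classical
  set S := A ∩ basicOpen t with hSdef
  have hpre : ∀ y : ↥S, t.prefixOf y.1 := fun y => y.2.2
  have hstop : ∀ y : ↥S, (stopSet t σ y.1).Nonempty := fun y =>
    chase_stop_nonempty ho hleg hwin y.2.1 (hpre y)
  set g : ↥S → Ordinal.{u} := fun y => sInf (stopSet t σ y.1) with hgdef
  have hgmem : ∀ y, g y ∈ stopSet t σ y.1 := fun y => csInf_mem (hstop y)
  have hglt : ∀ y, g y < o := fun y => (hgmem y).2.1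
  have hgev : ∀ y, EvenOrd (g y) := fun y => (hgmem y).1
  have hnos : ∀ y δ, δ < g y → δ ∉ stopSet t σ y.1 := fun y δ hδ hmem =>
    absurd (csInf_le (OrderBot.bddBelow _) hmem) hδ.not_ge
  have hgood : ∀ y β, β < g y →
      StepOK t (chaseRun t σ y.1) β ∧ (chaseRun t σ y.1 β).prefixOf y.1 := fun y β hβ =>
    chase_step ho hleg (hpre y) β (lt_trans hβ (hglt y))
      (fun δ hδ => hnos y δ (lt_of_le_of_lt hδ hβ))
  have hchain : ∀ y, StrictChain (chaseRun t σ y.1) (g y) := fun y α β h1 h2 =>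
    (hgood y β h2).1.1 α h1
  have hposy : ∀ y γ, γ ≤ g y → IsPosF t (resPlay (chaseRun t σ y.1) γ) γ := fun y γ hγ =>
    isPosF_of_stepOK (le_trans hγ (hglt y).le)
      (fun β hβ => (hgood y β (lt_of_lt_of_le hβ hγ)).1)
  set U : ↥S → SeqLT o 2 := fun y => chainUnion (g y) (chaseRun t σ y.1)
    (ho.bsup_len_lt (hglt y) _) (fun α β h1 h2 => (hchain y).le h1 h2) with hUdef
  have hUpre : ∀ y, (U y).prefixOf y.1 := by
    intro y c hc
    obtain ⟨α, hα, hcα⟩ := chainUnion_len_lt hc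
    rw [← (le_chainUnion hα).2 c hcα]
    exact (hgood y α hα).2 c hcα
  have hmovelen : ∀ y β, β < g y → (chaseRun t σ y.1 β).le (U y) := fun y β hβ =>
    le_chainUnion hβ
  -- the even moves are restrictions of y at the least candidate
  have hmove : ∀ y β, β < g y → EvenOrd β →
      chaseRun t σ y.1 β =
        y.1.res (sInf {b | Cand t σ y.1 (resPlay (chaseRun t σ y.1) β) β b}) ∧
        (∃ b, Cand t σ y.1 (resPlay (chaseRun t σ y.1) β) β b) := by
    intro y β hβ hev
    have hcand : ∃ b, Cand t σ y.1 (resPlay (chaseRun t σ y.1) β) β b := by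
      by_contra hcn
      exact hnos y β hβ ⟨hev, lt_trans hβ (hglt y), hcn⟩
    exact ⟨by rw [chaseRun, mkRun_even hev]; exact chaseI_eq hcand, hcand⟩
  refine ⟨fun y => (U y).snoc (y.1.val ((U y).len)), ?_⟩
  intro x x' hF
  by_contra hne
  have hbx : x.1.val ((U x).len) < 2 := x.1.val_lt _ (ho.len_lt _)
  have hbx' : x'.1.val ((U x').len) < 2 := x'.1.val_lt _ (ho.len_lt _)
  obtain ⟨hUU, hbb⟩ := snoc_inj ho hbx hbx' hF
  set ℓ := (U x).len with hℓdef
  have hlen1 : (U x').len = ℓ := by rw [← hUU]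
  have hagree : ∀ c, c ≤ ℓ → x.1.val c = x'.1.val c := by
    intro c hc
    rcases eq_or_lt_of_le hc with rfl | hlt
    · rw [hbb, hlen1]
    · rw [← hUpre x c hlt, hUU]
      exact hUpre x' c (by rw [hlen1]; exact hlt)
  have hDne : {c : Ordinal.{u} | x.1.val c ≠ x'.1.val c}.Nonempty := by
    by_contra hD
    rw [Set.not_nonempty_iff_eq_empty] at hD
    refine hne (Subtype.ext (SeqFull.ext' (fun c _ => ?_)))
    by_contra hcc
    exact absurd (Set.eq_empty_iff_forall_notMem.1 hD c) (fun h => h hcc)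
  set αs := sInf {c : Ordinal.{u} | x.1.val c ≠ x'.1.val c} with hαdef
  have hαmem : x.1.val αs ≠ x'.1.val αs := csInf_mem hDne
  have hαlow : ∀ c, c < αs → x.1.val c = x'.1.val c := by
    intro c hc
    by_contra hcc
    exact absurd (csInf_le (OrderBot.bddBelow _)
      (show c ∈ {c : Ordinal.{u} | x.1.val c ≠ x'.1.val c} from hcc)) hc.not_ge
  have hαo : αs < o := by
    by_contra h
    exact hαmem (by rw [x.1.val_zero _ (not_lt.1 h), x'.1.val_zero _ (not_lt.1 h)])
  have hℓα : ℓ < αs := by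
    rcases lt_or_ge ℓ αs with h | h
    · exact h
    · exact absurd (hagree αs h) hαmem
  have htα : t.len ≤ αs := by
    by_contra hlt'
    push_neg at hlt'
    exact hαmem (((hpre x) αs hlt').symm.trans ((hpre x') αs hlt'))
  -- the two chase runs agree below both stop stages
  have hrun_eq : ∀ β, β < g x → β < g x' → chaseRun t σ x.1 β = chaseRun t σ x'.1 β := by
    intro β
    induction β using Ordinal.induction with
    | _ β ihb =>
      intro hβ hβ'
      have hposeq : resPlay (chaseRun t σ x.1) β = resPlay (chaseRun t σ x'.1) β :=
        resPlay_congr (fun δ hδ => ihb δ hδ (lt_trans hδ hβ) (lt_trans hδ hβ'))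
      rcases evenOrd_or_oddOrd β with hev | hodd
      · have hβo : β < o := lt_trans hβ (hglt x)
        have hβ1o : β + 1 < o := ho.succ_lt hβo
        set P := resPlay (chaseRun t σ x.1) β with hPdef
        have hposP : IsPosF t P β := hposy x β hβ.le
        obtain ⟨hmx, hcx⟩ := hmove x β hβ hev
        obtain ⟨hmx', hcx'⟩ := hmove x' β hβ' hev
        rw [← hposeq] at hmx' hcx'
        set B := sInf {b | Cand t σ x.1 P β b} with hBdef
        set B' := sInf {b | Cand t σ x'.1 P β b} with hB'def
        have hBmem : Cand t σ x.1 P β B := csInf_mem hcx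
        have hB'mem : Cand t σ x'.1 P β B' := csInf_mem hcx'
        have hBo : B < o := hBmem.1
        have hB'o : B' < o := hB'mem.1
        have hBℓ : B ≤ ℓ := by
          have h1 := (hmovelen x β hβ).1
          rw [hmx, SeqFull.res_len (lt_of_lt_of_le hBo le_sup_left)] at h1
          exact h1
        have hB'ℓ : B' ≤ ℓ := by
          have h1 := (hmovelen x' β hβ').1
          rw [hmx', SeqFull.res_len (lt_of_lt_of_le hB'o le_sup_left), hlen1] at h1
          exact h1
        have hcross1 : Cand t σ x'.1 P β B :=
          cand_congr ho hleg (hpre x) (hpre x') hβ1o hev hposP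
            (fun c hc => hagree c (le_trans hc hBℓ)) hBmem
        have hcross2 : Cand t σ x.1 P β B' :=
          cand_congr ho hleg (hpre x') (hpre x) hβ1o hev hposP
            (fun c hc => (hagree c (le_trans hc hB'ℓ)).symm) hB'mem
        have hBB' : B = B' :=
          le_antisymm (csInf_le (OrderBot.bddBelow _) hcross2)
            (csInf_le (OrderBot.bddBelow _) hcross1)
        rw [hmx, hmx', ← hBB']
        exact SeqFull.res_congr (fun c hc => hagree c (le_trans hc.le hBℓ))
      · rw [chaseRun, chaseRun, mkRun_odd hodd, mkRun_odd hodd]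
        show σ β (resPlay (chaseRun t σ x.1) β) = σ β (resPlay (chaseRun t σ x'.1) β)
        rw [hposeq]
  -- the stop stages agree
  have hstopcross : ∀ (hglt' : g x < g x'), False := by
    intro hcase
    have hev := hgev x
    have hβo : g x < o := hglt x
    have hposeq : resPlay (chaseRun t σ x.1) (g x) = resPlay (chaseRun t σ x'.1) (g x) :=
      resPlay_congr (fun δ hδ => hrun_eq δ hδ (lt_trans hδ hcase))
    obtain ⟨hmx', hcx'⟩ := hmove x' (g x) hcase hev
    rw [← hposeq] at hmx' hcx'
    set P := resPlay (chaseRun t σ x.1) (g x) with hPdef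
    have hposP : IsPosF t P (g x) := hposy x (g x) le_rfl
    set B' := sInf {b | Cand t σ x'.1 P (g x) b} with hB'def
    have hB'mem : Cand t σ x'.1 P (g x) B' := csInf_mem hcx'
    have hB'ℓ : B' ≤ ℓ := by
      have h1 := (hmovelen x' (g x) hcase).1
      rw [hmx', SeqFull.res_len (lt_of_lt_of_le hB'mem.1 le_sup_left), hlen1] at h1
      exact h1
    have hcross : Cand t σ x.1 P (g x) B' :=
      cand_congr ho hleg (hpre x') (hpre x) (ho.succ_lt hβo) hev hposP
        (fun c hc => (hagree c (le_trans hc hB'ℓ)).symm) hB'mem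
    exact (hgmem x).2.2 ⟨B', hcross⟩
  have hgeq : g x = g x' := by
    rcases lt_trichotomy (g x) (g x') with h | h | h
    · exact absurd h (fun hh => hstopcross hh)
    · exact h
    · exfalso
      have hev := hgev x'
      have hβo : g x' < o := hglt x'
      have hposeq : resPlay (chaseRun t σ x'.1) (g x') = resPlay (chaseRun t σ x.1) (g x') :=
        resPlay_congr (fun δ hδ => (hrun_eq δ (lt_trans hδ h) hδ).symm)
      obtain ⟨hmx, hcx⟩ := hmove x (g x') h hev
      rw [← hposeq] at hmx hcx
      set P := resPlay (chaseRun t σ x'.1) (g x') with hPdef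
      have hposP : IsPosF t P (g x') := hposy x' (g x') le_rfl
      set B := sInf {b | Cand t σ x.1 P (g x') b} with hBdef
      have hBmem : Cand t σ x.1 P (g x') B := csInf_mem hcx
      have hBℓ : B ≤ ℓ := by
        have h1 := (hmovelen x (g x') h).1
        rw [hmx, SeqFull.res_len (lt_of_lt_of_le hBmem.1 le_sup_left)] at h1
        exact h1
      have hcross : Cand t σ x'.1 P (g x') B :=
        cand_congr ho hleg (hpre x) (hpre x') (ho.succ_lt hβo) hev hposP
          (fun c hc => hagree c (le_trans hc hBℓ)) hBmem
      exact (hgmem x').2.2 ⟨B, hcross⟩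
  -- final contradiction at the common stop stage
  set γ := g x with hγdef
  have hγo : γ < o := hglt x
  set P := resPlay (chaseRun t σ x.1) γ with hPdef
  have hposeq : resPlay (chaseRun t σ x'.1) γ = P :=
    resPlay_congr (fun δ hδ => (hrun_eq δ hδ (by rw [← hgeq]; exact hδ)).symm)
  have hposP : IsPosF t P γ := hposy x γ le_rfl
  have hUres : (U x).le (x.1.res αs) :=
    SeqFull.le_res (hUpre x) (lt_of_lt_of_le hαo le_sup_left) hℓα.le
  have hslt : ∀ δ, δ < γ → (P δ).slt (x.1.res αs) := by
    intro δ hδ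
    rw [hPdef, resPlay_lt hδ]
    refine SeqLT.slt_of_le_of_slt (hmovelen x δ hδ) ⟨hUres, ?_⟩
    rw [SeqFull.res_len (lt_of_lt_of_le hαo le_sup_left)]
    exact hℓα
  have hres_eq : x.1.res αs = x'.1.res αs := SeqFull.res_congr hαlow
  have hslt' : ∀ δ, δ < γ → (P δ).slt (x'.1.res αs) := by rw [← hres_eq]; exact hslt
  have hnc : ¬Cand t σ x.1 P γ αs := fun hc => (hgmem x).2.2 ⟨αs, hc⟩
  have hnc' : ¬Cand t σ x'.1 P γ αs := by
    intro hc
    refine (hgmem x').2.2 ⟨αs, ?_⟩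
    rw [← hgeq, hposeq]
    exact hc
  have hbitx := (cand_iff ho hleg (hpre x) (ho.succ_lt hγo) (hgev x) hposP hαo htα
    hslt).not.1 hnc
  have hbitx' := (cand_iff ho hleg (hpre x') (ho.succ_lt hγo) (hgev x) hposP hαo htα
    hslt').not.1 hnc'
  rw [← hres_eq] at hbitx'
  obtain ⟨hlenm, -⟩ := chase_response ho hleg (hpre x) (ho.succ_lt hγo) (hgev x)
    hposP hαo htα hslt
  have hm2 : (σ (γ + 1) (appendPlay P γ (x.1.res αs))).val αs < 2 :=
    (σ (γ + 1) (appendPlay P γ (x.1.res αs))).val_lt αs (by rw [hlenm]; exact lt_add_one _)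
  have hx2 : x.1.val αs < 2 := x.1.val_lt αs hαo
  have hx2' : x'.1.val αs < 2 := x'.1.val_lt αs hαo
  rcases ordinal_lt_two_iff.1 hm2 with hm | hm <;>
    rcases ordinal_lt_two_iff.1 hx2 with ha | ha <;>
      rcases ordinal_lt_two_iff.1 hx2' with hb | hb <;>
        first
          | exact hbitx (hm.trans ha.symm)
          | exact hbitx' (hm.trans hb.symm)
          | exact hαmem (ha.trans hb.symm)

end Aux12
section Aux13
open Ordinal Cardinal

/-- The SeqLT tree has at most `l` nodes. -/
theorem mk_seqLT_le {l : Cardinal.{u}} (hreg : l.IsRegular) (hunc : Cardinal.aleph0 < l)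
    (hpow : Cardinal.powerlt l l = l) :
    Cardinal.mk (SeqLT l.ord 2) ≤ Cardinal.lift.{u + 1} l := by
  set o := l.ord with hodef
  have ho : OrdH o := ordH_ord hreg hunc
  -- surjection from the coded pairs onto SeqLT
  set H : (Σ γ : ↥(Set.Iio o), (↥(Set.Iio γ.1) → Bool)) → SeqLT o 2 := fun z =>
    { len := z.1.1
      len_lt := lt_of_lt_of_le z.1.2 le_sup_left
      val := fun β => if h : β < z.1.1 then (if z.2 ⟨β, h⟩ then 1 else 0) else 0
      val_lt := fun β hβ => by
        show (if h : β < z.1.1 then (if z.2 ⟨β, h⟩ then (1 : Ordinal.{u}) else 0) else 0) < 2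
        rw [dif_pos hβ]
        split
        · exact ordinal_one_lt_two
        · exact ordinal_two_pos
      val_zero := fun β hβ => dif_neg (not_lt.2 hβ) } with hHdef
  have hsurj : Function.Surjective H := by
    intro s
    refine ⟨⟨⟨s.len, ho.len_lt s⟩, fun c => decide (s.val c.1 = 1)⟩, ?_⟩
    refine SeqLT.ext' rfl (fun c hc => ?_)
    show (if h : c < s.len then (if decide (s.val c = 1) then (1 : Ordinal.{u}) else 0)
      else 0) = s.val c
    rw [dif_pos hc]
    rcases ordinal_lt_two_iff.1 (s.val_lt c hc) with h0 | h1
    · rw [if_neg (by simp [h0]), h0]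
    · rw [if_pos (by simp [h1]), h1]
  refine le_trans (Cardinal.mk_le_of_surjective hsurj) ?_
  rw [Cardinal.mk_sigma]
  have hbound : ∀ γ : ↥(Set.Iio o), #(↥(Set.Iio γ.1) → Bool) ≤ Cardinal.lift.{u + 1} l := by
    intro γ
    rw [Cardinal.mk_arrow, Cardinal.mk_bool, Cardinal.lift_two, Cardinal.lift_uzero,
      Ordinal.mk_Iio_ordinal, ← Cardinal.lift_two_power]
    have hκ : (γ.1).card < l := Cardinal.lt_ord.1 γ.2
    have h1 : (2 : Cardinal.{u}) ^ (γ.1).card ≤ l ^ (γ.1).card :=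
      Cardinal.power_le_power_right (le_of_lt (lt_of_lt_of_le (Cardinal.nat_lt_aleph0 2) hunc.le))
    have h2 : l ^ (γ.1).card ≤ Cardinal.powerlt l l := Cardinal.le_powerlt l hκ
    exact Cardinal.lift_le.2 (le_trans h1 (le_trans h2 hpow.le))
  refine le_trans (Cardinal.sum_le_sum _ _ hbound) ?_
  rw [Cardinal.sum_const', Ordinal.mk_Iio_ordinal, Cardinal.card_ord, ← Cardinal.lift_mul,
    Cardinal.mul_eq_self hreg.aleph0_le]

end Aux13
/-- For an uncountable regular cardinal `λ` with `λ^{<λ} = λ`, `A ⊆ λ^2` and `t ∈ 2^{<λ}`: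
(1) player I has a winning strategy in the perfect set game `F^t_λ(A)` iff `A ∩ N_t` has a
perfect subset; (2) player II has a winning strategy in `F^t_λ(A)` iff `|A ∩ N_t| ≤ λ`. -/
theorem statement19 (l : Cardinal.{u}) (hreg : l.IsRegular) (hunc : Cardinal.aleph0 < l)
    (hpow : Cardinal.powerlt l l = l)
    (A : Set (SeqFull l.ord 2)) (t : SeqLT l.ord 2) :
    (WinFIStrat t A ↔
      ∃ T : Set (SeqLT l.ord 2), IsPerfectTree T ∧ treeBody T ⊆ A ∩ basicOpen t) ∧
    (WinFIIStrat t A ↔ Cardinal.mk ↥(A ∩ basicOpen t) ≤ Cardinal.lift.{u + 1} l) := by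
  have ho : OrdH l.ord := ordH_ord hreg hunc
  refine ⟨winFI_iff_perfect ho, ?_, ?_⟩
  · rintro ⟨σ, hleg, hwin⟩
    obtain ⟨F, hF⟩ := winFII_inj ho hleg hwin
    exact le_trans (Cardinal.mk_le_of_injective hF) (mk_seqLT_le hreg hunc hpow)
  · intro hcard
    obtain ⟨e, he⟩ := exists_enum _ hcard
    exact winFII_of_enum ho e he

end
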